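/- arXiv:0803.2171 — 5 statements merged into one kernel-verified Lean document; each statement's English description precedes it below -/
import Mathlib

section
/- Let Z be a strictly stationary mean-zero real-valued random field on ℤ³ with finite fourth moments, observed on finite index sets Dₙ ⊂ ℤ³ satisfying condition (C2) with d = 3. Let Λ = {k₁,…,k_m} ⊂ ℤ³ be a finite set of lags and suppose that for all kᵢ, kⱼ ∈ Λ one has Σ_{x∈ℤ³} |cov(Z(0)Z(kᵢ), Z(x)Z(x+kⱼ))| < ∞. Then the limit Σ = lim_{n→∞} |Dₙ| · cov(Ĝₙ, Ĝₙ) exists entrywise, and its (i,j)th entry equals Σ_{x∈ℤ³} cov(Z(0)Z(kᵢ), Z(x)Z(x+kⱼ)). -/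
open MeasureTheory ProbabilityTheory Filter Finset Topology
open scoped ENNReal

noncomputable section

/-- Covariance of two real-valued random variables: `cov(X,Y) = E[XY] − E[X]E[Y]`. -/
def covRV {Ω : Type*} [MeasurableSpace Ω] (P : Measure Ω) (X Y : Ω → ℝ) : ℝ :=
  (∫ ω, X ω * Y ω ∂P) - (∫ ω, X ω ∂P) * (∫ ω, Y ω ∂P)

/-- Strict stationarity of a random field on `ℤ^d`: every finite-dimensional joint
distribution is invariant under translation of the sites. -/
def StrictlyStationary {Ω : Type*} [MeasurableSpace Ω] (P : Measure Ω) {d : ℕ}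
    (Z : (Fin d → ℤ) → Ω → ℝ) : Prop :=
  ∀ (k : ℕ) (x : Fin k → (Fin d → ℤ)) (h : Fin d → ℤ),
    Measure.map (fun ω => fun i => Z (x i + h) ω) P =
      Measure.map (fun ω => fun i => Z (x i) ω) P

open Classical in
/-- The boundary of a finite index set `D ⊂ ℤ^d`:
`∂D = {x ∈ D : ∃ y ∉ D with max_j |x_j − y_j| = 1}`. -/
def latticeBoundary {d : ℕ} (D : Finset (Fin d → ℤ)) : Finset (Fin d → ℤ) :=
  D.filter (fun x => ∃ y : Fin d → ℤ, y ∉ D ∧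
    (Finset.univ.sup fun j => (x j - y j).natAbs) = 1)

/-- Condition (C2): `c₁ n^d ≤ |Dₙ| ≤ c₂ n^d` and `|∂Dₙ| ≤ c₃ n^{d−1}`. -/
def CondC2 {d : ℕ} (D : ℕ → Finset (Fin d → ℤ)) : Prop :=
  ∃ c₁ c₂ c₃ : ℝ, 0 < c₁ ∧ 0 < c₂ ∧ 0 < c₃ ∧ ∀ n : ℕ,
    c₁ * (n : ℝ) ^ d ≤ ((D n).card : ℝ) ∧ ((D n).card : ℝ) ≤ c₂ * (n : ℝ) ^ d ∧
    ((latticeBoundary (D n)).card : ℝ) ≤ c₃ * (n : ℝ) ^ (d - 1)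

open Classical in
/-- `Dₙ(k) = {x ∈ Dₙ : x + k ∈ Dₙ}`. -/
def lagSet {d : ℕ} (D : Finset (Fin d → ℤ)) (k : Fin d → ℤ) : Finset (Fin d → ℤ) :=
  D.filter (fun x => x + k ∈ D)

/-- The moment estimator `Ĉₙ(k) = (1/|Dₙ(k)|) ∑_{x∈Dₙ(k)} Z(x)Z(x+k)`. -/
def covEst {Ω : Type*} [MeasurableSpace Ω] {d : ℕ} (Z : (Fin d → ℤ) → Ω → ℝ)
    (D : Finset (Fin d → ℤ)) (k : Fin d → ℤ) (ω : Ω) : ℝ :=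
  ((lagSet D k).card : ℝ)⁻¹ * ∑ x ∈ lagSet D k, Z x ω * Z (x + k) ω

/-! ### Auxiliary lemmas -/

open Classical in
private lemma card_bad (D : Finset (Fin 3 → ℤ)) :
    ∀ (n : ℕ) (v : Fin 3 → ℤ), (∑ j, (v j).natAbs) = n →
      (D.filter (fun x => x + v ∉ D)).card ≤ n * (latticeBoundary D).card := by
  intro n
  induction n with
  | zero =>
    intro v hv
    have hv0 : v = 0 := by
      funext j
      have := Finset.sum_eq_zero_iff.mp hv j (Finset.mem_univ j)
      simpa [Int.natAbs_eq_zero] using this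
    subst hv0
    rw [Nat.zero_mul, Nat.le_zero, Finset.card_eq_zero]
    apply Finset.filter_false_of_mem
    intro x hx
    simp [hx]
  | succ n ih =>
    intro v hv
    obtain ⟨j, hj⟩ : ∃ j, v j ≠ 0 := by
      by_contra hc
      push_neg at hc
      simp [hc] at hv
    set e : Fin 3 → ℤ := fun l => if l = j then (if 0 < v j then 1 else -1) else 0 with he
    set v' : Fin 3 → ℤ := v - e with hv'
    have hvj : 1 ≤ (v j).natAbs := Int.natAbs_pos.mpr hj
    have hev : e + v' = v := by
      rw [hv']; abel
    have hv'j : (v' j).natAbs = (v j).natAbs - 1 := by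
      simp only [hv', he, Pi.sub_apply, if_pos rfl]
      split_ifs with h <;> omega
    have hv'l : ∀ l ∈ Finset.univ.erase j, (v' l).natAbs = (v l).natAbs := by
      intro l hl
      have : l ≠ j := Finset.ne_of_mem_erase hl
      simp [hv', he, this]
    have hsum' : (∑ l, (v' l).natAbs) = n := by
      have e1 : (∑ l ∈ Finset.univ.erase j, (v' l).natAbs) + (v' j).natAbs
          = ∑ l, (v' l).natAbs := Finset.sum_erase_add _ _ (Finset.mem_univ j)
      have e2 : (∑ l ∈ Finset.univ.erase j, (v l).natAbs) + (v j).natAbs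
          = ∑ l, (v l).natAbs := Finset.sum_erase_add _ _ (Finset.mem_univ j)
      rw [Finset.sum_congr rfl hv'l] at e1
      omega
    have hsub : D.filter (fun x => x + v ∉ D) ⊆
        (D.filter (fun x => x + e ∉ D)) ∪ (D.filter (fun x => x + e ∈ D ∧ (x + e) + v' ∉ D)) := by
      intro x hx
      rw [Finset.mem_filter] at hx
      obtain ⟨hxD, hxv⟩ := hx
      rw [Finset.mem_union, Finset.mem_filter, Finset.mem_filter]
      by_cases hxe : x + e ∈ D
      · refine Or.inr ⟨hxD, hxe, ?_⟩
        rw [add_assoc, hev]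
        exact hxv
      · exact Or.inl ⟨hxD, hxe⟩
    have h1 : (D.filter (fun x => x + e ∉ D)).card ≤ (latticeBoundary D).card := by
      apply Finset.card_le_card
      intro x hx
      rw [Finset.mem_filter] at hx
      unfold latticeBoundary
      rw [Finset.mem_filter]
      refine ⟨hx.1, x + e, hx.2, ?_⟩
      have hval : ∀ l, (x l - (x + e) l).natAbs = if l = j then 1 else 0 := by
        intro l
        by_cases hlj : l = j
        · by_cases hpos : 0 < v j
          · simp only [Pi.add_apply, he, if_pos hlj, if_pos hpos]
            omega
          · simp only [Pi.add_apply, he, if_pos hlj, if_neg hpos]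
            omega
        · simp [he, hlj]
      apply le_antisymm
      · apply Finset.sup_le
        intro l _
        rw [hval l]
        split <;> omega
      · calc (1:ℕ) = (x j - (x + e) j).natAbs := by rw [hval j, if_pos rfl]
          _ ≤ Finset.univ.sup fun l => (x l - (x + e) l).natAbs :=
            Finset.le_sup (f := fun l => (x l - (x + e) l).natAbs) (Finset.mem_univ j)
    have h2 : (D.filter (fun x => x + e ∈ D ∧ (x + e) + v' ∉ D)).card ≤
        (D.filter (fun x => x + v' ∉ D)).card := by
      apply Finset.card_le_card_of_injOn (fun x => x + e)
      · intro x hx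
        rw [Finset.mem_coe, Finset.mem_filter] at hx ⊢
        exact ⟨hx.2.1, hx.2.2⟩
      · intro a _ b _ hab
        exact add_right_cancel hab
    calc (D.filter (fun x => x + v ∉ D)).card
        ≤ ((D.filter (fun x => x + e ∉ D)) ∪ (D.filter (fun x => x + e ∈ D ∧ (x + e) + v' ∉ D))).card :=
          Finset.card_le_card hsub
      _ ≤ (D.filter (fun x => x + e ∉ D)).card + (D.filter (fun x => x + e ∈ D ∧ (x + e) + v' ∉ D)).card :=
          Finset.card_union_le _ _
      _ ≤ (latticeBoundary D).card + n * (latticeBoundary D).card := by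
          exact Nat.add_le_add h1 (le_trans h2 (ih v' hsum'))
      _ = (n + 1) * (latticeBoundary D).card := by ring

private lemma card_fiber {α : Type*} [AddCommGroup α] [DecidableEq α] (A B : Finset α) (h : α) :
    (((A ×ˢ B).filter (fun p => p.2 - p.1 = h)).card : ℕ)
      = (A.filter (fun x => x + h ∈ B)).card := by
  apply Finset.card_bij' (fun p _ => p.1) (fun x _ => (x, x + h))
  · intro p hp
    rw [Finset.mem_filter, Finset.mem_product] at hp
    rw [Finset.mem_filter]
    refine ⟨hp.1.1, ?_⟩
    have hpe : p.1 + h = p.2 := by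
      rw [← hp.2]; abel
    rw [hpe]
    exact hp.1.2
  · intro x hx
    rw [Finset.mem_filter] at hx
    rw [Finset.mem_filter, Finset.mem_product]
    refine ⟨⟨hx.1, hx.2⟩, ?_⟩
    show x + h - x = h
    rw [add_sub_cancel_left]
  · intro p hp
    rw [Finset.mem_filter, Finset.mem_product] at hp
    have hpe : p.1 + h = p.2 := by
      rw [← hp.2]; abel
    exact Prod.ext rfl hpe
  · intro x hx
    rfl

private lemma ratio_tendsto_one {β q : ℕ → ℝ} {M : ℝ}
    (hβ : Tendsto β atTop (𝓝 0))
    (hup : ∀ᶠ n in atTop, q n ≤ 1)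
    (hlo : ∀ᶠ n in atTop, 1 - M * β n ≤ q n) :
    Tendsto q atTop (𝓝 1) := by
  have h1 : Tendsto (fun n => 1 - M * β n) atTop (𝓝 1) := by
    have := (hβ.const_mul M).const_sub 1
    simpa using this
  exact tendsto_of_tendsto_of_tendsto_of_le_of_le' h1 tendsto_const_nhds hlo hup

private lemma halg (dd aa bb NN : ℝ) (hd : dd ≠ 0) :
    (NN / dd) / ((aa / dd) * (bb / dd)) = dd * aa⁻¹ * bb⁻¹ * NN := by
  rw [div_eq_mul_inv NN, div_eq_mul_inv aa, div_eq_mul_inv bb, div_eq_mul_inv,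
    mul_inv, mul_inv_rev, mul_inv_rev, inv_inv]
  have h1 : dd⁻¹ * dd = 1 := inv_mul_cancel₀ hd
  calc NN * dd⁻¹ * (dd * aa⁻¹ * (dd * bb⁻¹))
      = (dd⁻¹ * dd) * (dd * aa⁻¹ * bb⁻¹ * NN) := by ring
    _ = dd * aa⁻¹ * bb⁻¹ * NN := by rw [h1, one_mul]

section Analytic

variable {Ω : Type*} [MeasurableSpace Ω] {P : Measure Ω} [IsProbabilityMeasure P]
  {Z : (Fin 3 → ℤ) → Ω → ℝ}

private lemma memLp2_mul (hmom4 : ∀ x, MemLp (Z x) 4 P)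
    (a b : Fin 3 → ℤ) : MemLp (fun ω => Z a ω * Z b ω) 2 P := by
  have h : (1:ℝ≥0∞)/2 = 1/4 + 1/4 := by
    rw [ENNReal.div_add_div_same, ENNReal.div_eq_div_iff] <;> norm_num
  haveI : ENNReal.HolderTriple 4 4 2 := ⟨by simpa only [one_div] using h.symm⟩
  have := (hmom4 b).smul (hmom4 a) (r := 2)
  exact this

private lemma integrable_mul2 (hmom4 : ∀ x, MemLp (Z x) 4 P)
    (a b : Fin 3 → ℤ) : Integrable (fun ω => Z a ω * Z b ω) P :=
  (memLp2_mul hmom4 a b).integrable (by norm_num)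

private lemma integrable_mul4 (hmom4 : ∀ x, MemLp (Z x) 4 P)
    (a b c e : Fin 3 → ℤ) :
    Integrable (fun ω => (Z a ω * Z b ω) * (Z c ω * Z e ω)) P := by
  have h : (1:ℝ≥0∞)/1 = 1/2 + 1/2 := by
    rw [ENNReal.div_add_div_same, ENNReal.div_eq_div_iff] <;> norm_num
  haveI : ENNReal.HolderTriple 2 2 1 := ⟨by simpa only [one_div] using h.symm⟩
  have := (memLp2_mul hmom4 c e).smul (memLp2_mul hmom4 a b) (r := 1)
  rw [← memLp_one_iff_integrable]
  exact this

private lemma integral_shift (hmeas : ∀ x, Measurable (Z x))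
    (hstat : StrictlyStationary P Z) (a b c e x : Fin 3 → ℤ)
    (g : (Fin 4 → ℝ) → ℝ) (hg : Continuous g) :
    ∫ ω, g (fun i => Z (![a, b, c, e] i + x) ω) ∂P
      = ∫ ω, g (fun i => Z (![a, b, c, e] i) ω) ∂P := by
  have hmap := hstat 4 ![a, b, c, e] x
  have hf1 : Measurable (fun ω => fun i : Fin 4 => Z (![a, b, c, e] i + x) ω) :=
    measurable_pi_lambda _ (fun i => hmeas _)
  have hf2 : Measurable (fun ω => fun i : Fin 4 => Z (![a, b, c, e] i) ω) :=
    measurable_pi_lambda _ (fun i => hmeas _)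
  rw [← integral_map hf1.aemeasurable (hg.aestronglyMeasurable), hmap,
    integral_map hf2.aemeasurable (hg.aestronglyMeasurable)]

private lemma cov_shift (hmeas : ∀ x, Measurable (Z x))
    (hstat : StrictlyStationary P Z) (a b c e x : Fin 3 → ℤ) :
    covRV P (fun ω => Z (a + x) ω * Z (b + x) ω) (fun ω => Z (c + x) ω * Z (e + x) ω)
      = covRV P (fun ω => Z a ω * Z b ω) (fun ω => Z c ω * Z e ω) := by
  have hg1 : Continuous (fun v : Fin 4 → ℝ => (v 0 * v 1) * (v 2 * v 3)) := by
    fun_prop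
  have hg2 : Continuous (fun v : Fin 4 → ℝ => v 0 * v 1) := by fun_prop
  have hg3 : Continuous (fun v : Fin 4 → ℝ => v 2 * v 3) := by fun_prop
  have h1 := integral_shift hmeas hstat a b c e x _ hg1
  have h2 := integral_shift hmeas hstat a b c e x _ hg2
  have h3 := integral_shift hmeas hstat a b c e x _ hg3
  simp only [Matrix.cons_val_zero, Matrix.cons_val_one, Matrix.head_cons,
    Matrix.cons_val_two, Matrix.tail_cons, Matrix.cons_val_three, Matrix.head_fin_const] at h1 h2 h3
  unfold covRV
  rw [h1, h2, h3]

private lemma covRV_smul_sum {ι κ : Type*} (A : Finset ι) (B : Finset κ)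
    (F : ι → Ω → ℝ) (G : κ → Ω → ℝ) (c c' : ℝ)
    (hF : ∀ i ∈ A, Integrable (F i) P) (hG : ∀ j ∈ B, Integrable (G j) P)
    (hFG : ∀ i ∈ A, ∀ j ∈ B, Integrable (fun ω => F i ω * G j ω) P) :
    covRV P (fun ω => c * ∑ i ∈ A, F i ω) (fun ω => c' * ∑ j ∈ B, G j ω)
      = c * c' * ∑ i ∈ A, ∑ j ∈ B, covRV P (F i) (G j) := by
  unfold covRV
  have h1 : ∫ ω, (c * ∑ i ∈ A, F i ω) * (c' * ∑ j ∈ B, G j ω) ∂P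
      = c * c' * ∑ i ∈ A, ∑ j ∈ B, ∫ ω, F i ω * G j ω ∂P := by
    have heq : ∀ ω, (c * ∑ i ∈ A, F i ω) * (c' * ∑ j ∈ B, G j ω)
        = c * c' * ∑ i ∈ A, ∑ j ∈ B, F i ω * G j ω := by
      intro ω
      have e0 : (∑ i ∈ A, F i ω) * (∑ j ∈ B, G j ω) = ∑ i ∈ A, ∑ j ∈ B, F i ω * G j ω :=
        Finset.sum_mul_sum _ _ _ _
      rw [← e0]
      ring
    simp only [heq]
    rw [integral_const_mul, integral_finset_sum]
    · congr 1
      apply Finset.sum_congr rfl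
      intro i hi
      rw [integral_finset_sum]
      intro j hj
      exact hFG i hi j hj
    · intro i hi
      exact integrable_finset_sum _ (fun j hj => hFG i hi j hj)
  have h2 : ∫ ω, (c * ∑ i ∈ A, F i ω) ∂P = c * ∑ i ∈ A, ∫ ω, F i ω ∂P := by
    rw [integral_const_mul, integral_finset_sum _ hF]
  have h3 : ∫ ω, (c' * ∑ j ∈ B, G j ω) ∂P = c' * ∑ j ∈ B, ∫ ω, G j ω ∂P := by
    rw [integral_const_mul, integral_finset_sum _ hG]
  rw [h1, h2, h3]
  simp only [Finset.sum_sub_distrib]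
  rw [← Finset.sum_mul_sum]
  ring

end Analytic

private lemma wbound {d a b NN : ℝ} (ha : 0 < a) (hb : 0 < b)
    (hNN : 0 ≤ NN) (hNb : NN ≤ b) (hA2 : d ≤ 2 * a) (hd : 0 ≤ d) :
    0 ≤ d * a⁻¹ * b⁻¹ * NN ∧ d * a⁻¹ * b⁻¹ * NN ≤ 2 := by
  constructor
  · have h1 : (0:ℝ) ≤ a⁻¹ := inv_nonneg.mpr ha.le
    have h2 : (0:ℝ) ≤ b⁻¹ := inv_nonneg.mpr hb.le
    have := mul_nonneg (mul_nonneg (mul_nonneg hd h1) h2) hNN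
    exact this
  · have e1 : d * a⁻¹ * b⁻¹ * NN ≤ d * a⁻¹ * b⁻¹ * b := by
      apply mul_le_mul_of_nonneg_left hNb
      have h1 : (0:ℝ) ≤ a⁻¹ := inv_nonneg.mpr ha.le
      have h2 : (0:ℝ) ≤ b⁻¹ := inv_nonneg.mpr hb.le
      exact mul_nonneg (mul_nonneg hd h1) h2
    have e2 : d * a⁻¹ * b⁻¹ * b = d * a⁻¹ := by
      rw [mul_assoc, inv_mul_cancel₀ (ne_of_gt hb), mul_one]
    have e3 : d * a⁻¹ ≤ 2 := by
      rw [← div_eq_mul_inv, div_le_iff₀ ha]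
      linarith
    linarith

set_option maxHeartbeats 1000000 in
/-- first part of Theorem 1. For a strictly stationary mean-zero random
field on `ℤ³` with finite fourth moments, observed on sets `Dₙ` satisfying (C2), if the
covariances of products are absolutely summable over all lags in `Λ`, then
`|Dₙ|·cov(Ĉₙ(kᵢ), Ĉₙ(kⱼ))` converges, for each pair of lags, to
`∑_{x∈ℤ³} cov(Z(0)Z(kᵢ), Z(x)Z(x+kⱼ))`. -/
theorem asymptotic_covariance_matrix_discrete_lags
    {Ω : Type*} [MeasurableSpace Ω] (P : Measure Ω) [IsProbabilityMeasure P]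
    (Z : (Fin 3 → ℤ) → Ω → ℝ)
    (hmeas : ∀ x, Measurable (Z x))
    (hstat : StrictlyStationary P Z)
    (hmean : ∀ x, ∫ ω, Z x ω ∂P = 0)
    (hmom4 : ∀ x, MemLp (Z x) 4 P)
    (D : ℕ → Finset (Fin 3 → ℤ)) (hD : CondC2 D)
    (m : ℕ) (k : Fin m → (Fin 3 → ℤ))
    (hsum : ∀ i j : Fin m, Summable (fun x : Fin 3 → ℤ =>
      |covRV P (fun ω => Z 0 ω * Z (k i) ω) (fun ω => Z x ω * Z (x + k j) ω)|)) :
    ∀ i j : Fin m,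
      Tendsto (fun n => ((D n).card : ℝ) *
          covRV P (covEst Z (D n) (k i)) (covEst Z (D n) (k j))) atTop
        (𝓝 (∑' x : Fin 3 → ℤ,
          covRV P (fun ω => Z 0 ω * Z (k i) ω) (fun ω => Z x ω * Z (x + k j) ω))) := by
  intro i j
  obtain ⟨c₁, c₂, c₃, hc₁, hc₂, hc₃, hC⟩ := hD
  set R : (Fin 3 → ℤ) → ℝ := fun h =>
    covRV P (fun ω => Z 0 ω * Z (k i) ω) (fun ω => Z h ω * Z (h + k j) ω) with hR
  have hsumR : Summable (fun h => |R h|) := by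
    simp only [hR]
    exact hsum i j
  set N : ℕ → (Fin 3 → ℤ) → ℕ := fun n h =>
    ((lagSet (D n) (k i)).filter (fun x => x + h ∈ lagSet (D n) (k j))).card with hN
  set f : ℕ → (Fin 3 → ℤ) → ℝ := fun n h =>
    ((D n).card : ℝ) * ((lagSet (D n) (k i)).card : ℝ)⁻¹ *
      ((lagSet (D n) (k j)).card : ℝ)⁻¹ * (N n h : ℝ) * R h with hf
  set L : (Fin 3 → ℤ) → ℕ := fun v => ∑ l, (v l).natAbs with hL
  -- shift identity
  have hshift : ∀ x y : Fin 3 → ℤ,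
      covRV P (fun ω => Z x ω * Z (x + k i) ω) (fun ω => Z y ω * Z (y + k j) ω) = R (y - x) := by
    intro x y
    have h := cov_shift hmeas hstat 0 (k i) (y - x) (y - x + k j) x
    have e1 : (0 : Fin 3 → ℤ) + x = x := by abel
    have e2 : k i + x = x + k i := by abel
    have e3 : y - x + x = y := by abel
    have e4 : y - x + k j + x = y + k j := by abel
    rw [e1, e2, e3, e4] at h
    rw [h, hR]
  -- Step A: the algebraic identity
  have key : ∀ n, ((D n).card : ℝ) * covRV P (covEst Z (D n) (k i)) (covEst Z (D n) (k j))
      = ∑' h, f n h := by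
    intro n
    have hbil := covRV_smul_sum (P := P) (lagSet (D n) (k i)) (lagSet (D n) (k j))
      (fun x ω => Z x ω * Z (x + k i) ω) (fun y ω => Z y ω * Z (y + k j) ω)
      (((lagSet (D n) (k i)).card : ℝ)⁻¹) (((lagSet (D n) (k j)).card : ℝ)⁻¹)
      (fun x _ => integrable_mul2 hmom4 _ _)
      (fun y _ => integrable_mul2 hmom4 _ _)
      (fun x _ y _ => integrable_mul4 hmom4 _ _ _ _)
    simp only [hshift] at hbil
    have hcov : covRV P (covEst Z (D n) (k i)) (covEst Z (D n) (k j))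
        = ((lagSet (D n) (k i)).card : ℝ)⁻¹ * ((lagSet (D n) (k j)).card : ℝ)⁻¹ *
          ∑ x ∈ lagSet (D n) (k i), ∑ y ∈ lagSet (D n) (k j), R (y - x) := hbil
    set T : Finset (Fin 3 → ℤ) :=
      ((lagSet (D n) (k i)) ×ˢ (lagSet (D n) (k j))).image (fun p => p.2 - p.1) with hT
    have hDS : ∑ x ∈ lagSet (D n) (k i), ∑ y ∈ lagSet (D n) (k j), R (y - x)
        = ∑ h ∈ T, (N n h : ℝ) * R h := by
      rw [← Finset.sum_product']
      rw [Finset.sum_comp (fun h => R h) (fun p : (Fin 3 → ℤ) × (Fin 3 → ℤ) => p.2 - p.1)]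
      apply Finset.sum_congr rfl
      intro h hh
      rw [nsmul_eq_mul, card_fiber]
    have hsupp : ∀ h ∉ T, f n h = 0 := by
      intro h hh
      have hN0 : N n h = 0 := by
        rw [hN, Finset.card_eq_zero]
        by_contra hne
        obtain ⟨x, hx⟩ := Finset.nonempty_of_ne_empty hne
        rw [Finset.mem_filter] at hx
        apply hh
        rw [hT]
        apply Finset.mem_image.mpr
        exact ⟨(x, x + h), Finset.mem_product.mpr ⟨hx.1, hx.2⟩, by rw [add_sub_cancel_left]⟩
      simp [hf, hN0]
    rw [tsum_eq_sum hsupp, hcov, hDS]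
    simp only [hf]
    simp only [Finset.mul_sum]
    apply Finset.sum_congr rfl
    intro h hh
    ring
  -- basic cardinality bounds
  have hlag_low : ∀ (n : ℕ) (v : Fin 3 → ℤ),
      ((D n).card : ℝ) - (L v : ℝ) * ((latticeBoundary (D n)).card : ℝ)
        ≤ ((lagSet (D n) v).card : ℝ) := by
    intro n v
    have h1 : ((D n).filter (fun x => x + v ∉ D n)).card ≤ L v * (latticeBoundary (D n)).card :=
      card_bad (D n) (L v) v (by rw [hL])
    have h2 : (lagSet (D n) v).card + ((D n).filter (fun x => ¬ (x + v ∈ D n))).card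
        = (D n).card :=
      Finset.card_filter_add_card_filter_not (p := fun x => x + v ∈ D n)
    push_cast
    have h1' : (((D n).filter (fun x => x + v ∉ D n)).card : ℝ)
        ≤ (L v : ℝ) * ((latticeBoundary (D n)).card : ℝ) := by exact_mod_cast h1
    have h2' : ((lagSet (D n) v).card : ℝ) + (((D n).filter (fun x => ¬ (x + v ∈ D n))).card : ℝ)
        = ((D n).card : ℝ) := by exact_mod_cast h2
    linarith
  have hlag_le : ∀ (n : ℕ) (v : Fin 3 → ℤ), (lagSet (D n) v).card ≤ (D n).card := by
    intro n v
    exact Finset.card_le_card (Finset.filter_subset _ _)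
  -- N lower bound
  have hNalt : ∀ (n : ℕ) (h : Fin 3 → ℤ),
      (lagSet (D n) (k i)).filter (fun x => x + h ∈ lagSet (D n) (k j))
        = (D n).filter (fun x => x + k i ∈ D n ∧ x + h ∈ D n ∧ (x + h) + k j ∈ D n) := by
    intro n h
    ext x
    simp only [lagSet, Finset.mem_filter]
    tauto
  have hN_low : ∀ (n : ℕ) (h : Fin 3 → ℤ),
      ((D n).card : ℝ) - ((L (k i) : ℝ) + (L h : ℝ) + (L (h + k j) : ℝ)) *
          ((latticeBoundary (D n)).card : ℝ) ≤ (N n h : ℝ) := by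
    intro n h
    have hsub : (D n).filter (fun x => ¬ (x + k i ∈ D n ∧ x + h ∈ D n ∧ (x + h) + k j ∈ D n)) ⊆
        ((D n).filter (fun x => x + k i ∉ D n) ∪ (D n).filter (fun x => x + h ∉ D n)) ∪
          (D n).filter (fun x => x + (h + k j) ∉ D n) := by
      intro x hx
      rw [Finset.mem_filter] at hx
      simp only [Finset.mem_union, Finset.mem_filter]
      have hassoc : x + (h + k j) = (x + h) + k j := (add_assoc x h (k j)).symm
      rw [hassoc]
      tauto
    have hcard : ((D n).filter
          (fun x => ¬ (x + k i ∈ D n ∧ x + h ∈ D n ∧ (x + h) + k j ∈ D n))).card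
        ≤ (L (k i) + L h + L (h + k j)) * (latticeBoundary (D n)).card := by
      calc ((D n).filter
            (fun x => ¬ (x + k i ∈ D n ∧ x + h ∈ D n ∧ (x + h) + k j ∈ D n))).card
          ≤ (((D n).filter (fun x => x + k i ∉ D n) ∪ (D n).filter (fun x => x + h ∉ D n)) ∪
              (D n).filter (fun x => x + (h + k j) ∉ D n)).card := Finset.card_le_card hsub
        _ ≤ ((D n).filter (fun x => x + k i ∉ D n) ∪ (D n).filter (fun x => x + h ∉ D n)).card
            + ((D n).filter (fun x => x + (h + k j) ∉ D n)).card := Finset.card_union_le _ _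
        _ ≤ ((D n).filter (fun x => x + k i ∉ D n)).card
            + ((D n).filter (fun x => x + h ∉ D n)).card
            + ((D n).filter (fun x => x + (h + k j) ∉ D n)).card :=
            Nat.add_le_add_right (Finset.card_union_le _ _) _
        _ ≤ L (k i) * (latticeBoundary (D n)).card + L h * (latticeBoundary (D n)).card
            + L (h + k j) * (latticeBoundary (D n)).card :=
            Nat.add_le_add (Nat.add_le_add (card_bad _ _ _ (by rw [hL]))
              (card_bad _ _ _ (by rw [hL]))) (card_bad _ _ _ (by rw [hL]))
        _ = (L (k i) + L h + L (h + k j)) * (latticeBoundary (D n)).card := by ring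
    have hsplit : (N n h) + ((D n).filter
          (fun x => ¬ (x + k i ∈ D n ∧ x + h ∈ D n ∧ (x + h) + k j ∈ D n))).card
        = (D n).card := by
      simp only [hN]
      rw [hNalt n h]
      exact Finset.card_filter_add_card_filter_not
        (p := fun x => x + k i ∈ D n ∧ x + h ∈ D n ∧ (x + h) + k j ∈ D n)
    have hc' : (((D n).filter
          (fun x => ¬ (x + k i ∈ D n ∧ x + h ∈ D n ∧ (x + h) + k j ∈ D n))).card : ℝ)
        ≤ ((L (k i) : ℝ) + (L h : ℝ) + (L (h + k j) : ℝ)) *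
          ((latticeBoundary (D n)).card : ℝ) := by
      exact_mod_cast hcard
    have hs' : (N n h : ℝ) + (((D n).filter
          (fun x => ¬ (x + k i ∈ D n ∧ x + h ∈ D n ∧ (x + h) + k j ∈ D n))).card : ℝ)
        = ((D n).card : ℝ) := by exact_mod_cast hsplit
    linarith
  -- positivity of |Dₙ| and boundary/volume ratio tends to zero
  have hdpos : ∀ n : ℕ, 1 ≤ n → 0 < ((D n).card : ℝ) := by
    intro n hn
    have h1 := (hC n).1
    have hn' : (1:ℝ) ≤ (n:ℝ) := by exact_mod_cast hn
    have hp : (0:ℝ) < (n:ℝ)^3 := by positivity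
    nlinarith [mul_pos hc₁ hp]
  have hβ : Tendsto (fun n => ((latticeBoundary (D n)).card : ℝ) / ((D n).card : ℝ))
      atTop (𝓝 0) := by
    apply tendsto_of_tendsto_of_tendsto_of_le_of_le' (tendsto_const_nhds (x := (0:ℝ)))
      (tendsto_const_div_atTop_nhds_zero_nat (c₃/c₁))
    · exact Eventually.of_forall (fun n => by positivity)
    · filter_upwards [eventually_ge_atTop 1] with n hn
      have hd := hdpos n hn
      have hb := (hC n).2.2
      have hlo := (hC n).1
      have hn' : (1:ℝ) ≤ (n:ℝ) := by exact_mod_cast hn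
      have hn0 : (0:ℝ) < (n:ℝ) := by linarith
      have e1 : ((latticeBoundary (D n)).card : ℝ) / ((D n).card : ℝ)
          ≤ (c₃ * (n:ℝ)^(3-1)) / (c₁ * (n:ℝ)^3) :=
        div_le_div₀ (by positivity) hb (by positivity) hlo
      have e2 : (c₃ * (n:ℝ)^(3-1)) / (c₁ * (n:ℝ)^3) = c₃/c₁ / (n:ℝ) := by
        rw [show (3-1 : ℕ) = 2 from rfl]
        field_simp
      rw [e2] at e1
      exact e1
  -- ratio limits
  have hqlag : ∀ v : Fin 3 → ℤ,
      Tendsto (fun n => ((lagSet (D n) v).card : ℝ) / ((D n).card : ℝ)) atTop (𝓝 1) := by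
    intro v
    apply ratio_tendsto_one (M := (L v : ℝ)) hβ
    · filter_upwards [eventually_ge_atTop 1] with n hn
      apply div_le_one_of_le₀
      · exact_mod_cast hlag_le n v
      · positivity
    · filter_upwards [eventually_ge_atTop 1] with n hn
      have hd := hdpos n hn
      have heq : 1 - (L v : ℝ) * (((latticeBoundary (D n)).card : ℝ) / ((D n).card : ℝ))
          = (((D n).card : ℝ) - (L v : ℝ) * ((latticeBoundary (D n)).card : ℝ)) / ((D n).card : ℝ) := by
        field_simp
      rw [heq]
      exact (div_le_div_iff_of_pos_right hd).mpr (hlag_low n v)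
  have hqN : ∀ h : Fin 3 → ℤ,
      Tendsto (fun n => (N n h : ℝ) / ((D n).card : ℝ)) atTop (𝓝 1) := by
    intro h
    apply ratio_tendsto_one (M := (L (k i) : ℝ) + (L h : ℝ) + (L (h + k j) : ℝ)) hβ
    · filter_upwards [eventually_ge_atTop 1] with n hn
      apply div_le_one_of_le₀
      · have h1 : N n h ≤ (lagSet (D n) (k i)).card := Finset.card_filter_le _ _
        have h2 := hlag_le n (k i)
        exact_mod_cast le_trans h1 h2
      · positivity
    · filter_upwards [eventually_ge_atTop 1] with n hn
      have hd := hdpos n hn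
      have heq : 1 - ((L (k i) : ℝ) + (L h : ℝ) + (L (h + k j) : ℝ)) *
            (((latticeBoundary (D n)).card : ℝ) / ((D n).card : ℝ))
          = (((D n).card : ℝ) - ((L (k i) : ℝ) + (L h : ℝ) + (L (h + k j) : ℝ)) *
              ((latticeBoundary (D n)).card : ℝ)) / ((D n).card : ℝ) := by
        field_simp
      rw [heq]
      exact (div_le_div_iff_of_pos_right hd).mpr (hN_low n h)
  -- pointwise convergence
  have hw : ∀ h : Fin 3 → ℤ,
      Tendsto (fun n => ((D n).card : ℝ) * ((lagSet (D n) (k i)).card : ℝ)⁻¹ *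
        ((lagSet (D n) (k j)).card : ℝ)⁻¹ * (N n h : ℝ)) atTop (𝓝 1) := by
    intro h
    have hdiv := (hqN h).div ((hqlag (k i)).mul (hqlag (k j))) (by norm_num)
    rw [show (1:ℝ)/(1*1) = 1 by norm_num] at hdiv
    apply hdiv.congr'
    filter_upwards [eventually_ge_atTop 1] with n hn
    exact halg _ _ _ _ (ne_of_gt (hdpos n hn))
  have hpt : ∀ h : Fin 3 → ℤ, Tendsto (fun n => f n h) atTop (𝓝 (R h)) := by
    intro h
    have h1 := (hw h).mul_const (R h)
    rw [one_mul] at h1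
    exact h1.congr (fun n => by simp only [hf])
  -- uniform bound
  have hbound : ∀ᶠ n in atTop, ∀ h, ‖f n h‖ ≤ 2 * |R h| := by
    have hsm_i : ∀ᶠ n in atTop, (L (k i) : ℝ) *
        (((latticeBoundary (D n)).card : ℝ) / ((D n).card : ℝ)) < 1/2 := by
      have h0 := hβ.const_mul (L (k i) : ℝ)
      rw [mul_zero] at h0
      exact h0.eventually_lt_const (by norm_num)
    have hsm_j : ∀ᶠ n in atTop, (L (k j) : ℝ) *
        (((latticeBoundary (D n)).card : ℝ) / ((D n).card : ℝ)) < 1/2 := by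
      have h0 := hβ.const_mul (L (k j) : ℝ)
      rw [mul_zero] at h0
      exact h0.eventually_lt_const (by norm_num)
    filter_upwards [hsm_i, hsm_j, eventually_ge_atTop 1] with n hi2 hj2 hn
    intro h
    have hd := hdpos n hn
    have hbdd : (L (k i) : ℝ) * ((latticeBoundary (D n)).card : ℝ)
        < (1/2) * ((D n).card : ℝ) := by
      have e0 : (L (k i) : ℝ) * ((latticeBoundary (D n)).card : ℝ)
          = ((L (k i) : ℝ) * (((latticeBoundary (D n)).card : ℝ) / ((D n).card : ℝ)))
            * ((D n).card : ℝ) := by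
        field_simp
      rw [e0]
      exact mul_lt_mul_of_pos_right hi2 hd
    have hbdd' : (L (k j) : ℝ) * ((latticeBoundary (D n)).card : ℝ)
        < (1/2) * ((D n).card : ℝ) := by
      have e0 : (L (k j) : ℝ) * ((latticeBoundary (D n)).card : ℝ)
          = ((L (k j) : ℝ) * (((latticeBoundary (D n)).card : ℝ) / ((D n).card : ℝ)))
            * ((D n).card : ℝ) := by
        field_simp
      rw [e0]
      exact mul_lt_mul_of_pos_right hj2 hd
    have hA2 : ((D n).card : ℝ) ≤ 2 * ((lagSet (D n) (k i)).card : ℝ) := by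
      have h0 := hlag_low n (k i)
      linarith
    have hB2 : ((D n).card : ℝ) ≤ 2 * ((lagSet (D n) (k j)).card : ℝ) := by
      have h0 := hlag_low n (k j)
      linarith
    have hApos : (0:ℝ) < ((lagSet (D n) (k i)).card : ℝ) := by linarith
    have hBpos : (0:ℝ) < ((lagSet (D n) (k j)).card : ℝ) := by linarith
    have hNB : (N n h : ℝ) ≤ ((lagSet (D n) (k j)).card : ℝ) := by
      have h0 : N n h ≤ (lagSet (D n) (k j)).card := by
        simp only [hN]
        apply Finset.card_le_card_of_injOn (fun x => x + h)
        · intro x hx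
          rw [Finset.mem_coe, Finset.mem_filter] at hx
          exact hx.2
        · intro a _ b _ hab
          exact add_right_cancel hab
      exact_mod_cast h0
    obtain ⟨hw0, hw2⟩ := wbound hApos hBpos (Nat.cast_nonneg _) hNB hA2 (Nat.cast_nonneg _)
    have hfval : f n h = (((D n).card : ℝ) * ((lagSet (D n) (k i)).card : ℝ)⁻¹ *
        ((lagSet (D n) (k j)).card : ℝ)⁻¹ * (N n h : ℝ)) * R h := by
      simp only [hf]
    rw [hfval, Real.norm_eq_abs, abs_mul, abs_of_nonneg hw0]
    exact mul_le_mul_of_nonneg_right hw2 (abs_nonneg _)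
  -- conclusion via dominated convergence for series
  have htan := tendsto_tsum_of_dominated_convergence (hsumR.mul_left 2) hpt hbound
  exact (tendsto_congr key).mpr htan


end
end

section
/- Let Z be a mean-zero real-valued random field on S × ℤ (S ⊂ ℝ² a fixed finite set of spatial sites) with finite fourth moments, strictly stationary in time and with covariance cov(Z(s,t), Z(s+h,t+u)) = C(h,u) depending only on the lag (h,u). Let Λ = {(h₁,u₁),…,(h_m,u_m)} be a finite set of space–time lags with each S(hᵢ) nonempty. Assume that Σ_{t∈ℤ} |cov{Z(s₁,0)Z(s₁+hᵢ,uᵢ), Z(s₂,t)Z(s₂+hⱼ,t+uⱼ)}| < ∞ for all i,j ≤ m, all s₁ ∈ S(hᵢ) and all s₂ ∈ S(hⱼ). Then the limit Σ = lim_{n→∞} |Tₙ| cov(Ĝₙ, Ĝₙ) exists entrywise, and its (i,j)th entry equals (1/(|S(hᵢ)||S(hⱼ)|)) Σ_{s₁∈S(hᵢ)} Σ_{s₂∈S(hⱼ)} Σ_{t∈ℤ} cov{Z(s₁,0)Z(s₁+hᵢ,uᵢ), Z(s₂,t)Z(s₂+hⱼ,t+uⱼ)}. -/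
open MeasureTheory ProbabilityTheory Filter Finset Topology
open scoped ENNReal NNReal

noncomputable section

/-- Strict stationarity in time of a random field on `S × ℤ`: the joint law of finitely
many coordinates, at sites in `S`, is invariant under time shifts. -/
def TimeStationary {Ω : Type*} [MeasurableSpace Ω] (P : Measure Ω)
    (S : Finset (ℝ × ℝ)) (Z : (ℝ × ℝ) → ℤ → Ω → ℝ) : Prop :=
  ∀ (k : ℕ) (s : Fin k → ℝ × ℝ) (t : Fin k → ℤ) (τ : ℤ), (∀ i, s i ∈ S) →
    Measure.map (fun ω => fun i => Z (s i) (t i + τ) ω) P =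
      Measure.map (fun ω => fun i => Z (s i) (t i) ω) P

open Classical in
/-- `S(h) = {s ∈ S : s + h ∈ S}`. -/
def spatialLagSet (S : Finset (ℝ × ℝ)) (h : ℝ × ℝ) : Finset (ℝ × ℝ) :=
  S.filter (fun s => s + h ∈ S)

/-- The estimator
`Ĉₙ(h,u) = (1/(|S(h)| |Tₙ|)) ∑_{s∈S(h)} ∑_{t=1}^{n−u} Z(s,t)Z(s+h,t+u)`, with `Tₙ = {1,…,n}`. -/
def covEstST {Ω : Type*} [MeasurableSpace Ω] (Z : (ℝ × ℝ) → ℤ → Ω → ℝ)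
    (S : Finset (ℝ × ℝ)) (h : ℝ × ℝ) (u : ℕ) (n : ℕ) (ω : Ω) : ℝ :=
  (((spatialLagSet S h).card : ℝ) * (n : ℝ))⁻¹ *
    ∑ s ∈ spatialLagSet S h, ∑ t ∈ Finset.Icc (1 : ℤ) ((n : ℤ) - (u : ℤ)),
      Z s t ω * Z (s + h) (t + (u : ℤ)) ω

/-! ### Auxiliary lemmas -/

section Aux

variable {Ω : Type*} [MeasurableSpace Ω] {P : Measure Ω}

lemma covRV_const_mul' (c d : ℝ) (F G : Ω → ℝ) :
    covRV P (fun ω => c * F ω) (fun ω => d * G ω) = c * d * covRV P F G := by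
  unfold covRV
  simp_rw [show ∀ ω, (c * F ω) * (d * G ω) = (c * d) * (F ω * G ω) by intro ω; ring,
    integral_const_mul]
  ring

lemma covRV_sum_sum' {ι κ : Type*} (K : Finset ι) (L : Finset κ)
    (F : ι → Ω → ℝ) (G : κ → Ω → ℝ)
    (hF : ∀ k ∈ K, Integrable (F k) P) (hG : ∀ l ∈ L, Integrable (G l) P)
    (hFG : ∀ k ∈ K, ∀ l ∈ L, Integrable (fun ω => F k ω * G l ω) P) :
    covRV P (fun ω => ∑ k ∈ K, F k ω) (fun ω => ∑ l ∈ L, G l ω) =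
      ∑ k ∈ K, ∑ l ∈ L, covRV P (F k) (G l) := by
  unfold covRV
  rw [integral_finset_sum _ hF, integral_finset_sum _ hG]
  have h1 : ∫ ω, (∑ k ∈ K, F k ω) * (∑ l ∈ L, G l ω) ∂P
      = ∑ k ∈ K, ∑ l ∈ L, ∫ ω, F k ω * G l ω ∂P := by
    simp_rw [Finset.sum_mul, Finset.mul_sum]
    rw [integral_finset_sum]
    · refine Finset.sum_congr rfl fun k hk => ?_
      rw [integral_finset_sum _ (fun l hl => hFG k hk l hl)]
    · intro k hk
      exact integrable_finset_sum _ (fun l hl => hFG k hk l hl)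
  rw [h1, Finset.sum_mul, ← Finset.sum_sub_distrib]
  refine Finset.sum_congr rfl fun k hk => ?_
  rw [Finset.mul_sum, ← Finset.sum_sub_distrib]

lemma integral_comp_eq_of_map_eq' {k : ℕ} {φ ψ : Ω → Fin k → ℝ}
    (hφ : Measurable φ) (hψ : Measurable ψ)
    (hmap : Measure.map φ P = Measure.map ψ P) {g : (Fin k → ℝ) → ℝ}
    (hg : Measurable g) :
    ∫ ω, g (φ ω) ∂P = ∫ ω, g (ψ ω) ∂P := by
  rw [← integral_map hφ.aemeasurable hg.aestronglyMeasurable, hmap,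
    integral_map hψ.aemeasurable hg.aestronglyMeasurable]

variable {S : Finset (ℝ × ℝ)} {Z : (ℝ × ℝ) → ℤ → Ω → ℝ}

lemma shift4' (hmeas : ∀ s t, Measurable (Z s t)) (hstat : TimeStationary P S Z)
    {s₁ s₂ s₃ s₄ : ℝ × ℝ} (h₁ : s₁ ∈ S) (h₂ : s₂ ∈ S) (h₃ : s₃ ∈ S) (h₄ : s₄ ∈ S)
    (t₁ t₂ t₃ t₄ τ : ℤ) :
    ∫ ω, (Z s₁ (t₁ + τ) ω * Z s₂ (t₂ + τ) ω) * (Z s₃ (t₃ + τ) ω * Z s₄ (t₄ + τ) ω) ∂P =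
      ∫ ω, (Z s₁ t₁ ω * Z s₂ t₂ ω) * (Z s₃ t₃ ω * Z s₄ t₄ ω) ∂P := by
  have hmap := hstat 4 ![s₁, s₂, s₃, s₄] ![t₁, t₂, t₃, t₄] τ
    (by intro k; fin_cases k <;> assumption)
  have hφ : Measurable (fun ω => fun i : Fin 4 =>
      Z (![s₁, s₂, s₃, s₄] i) (![t₁, t₂, t₃, t₄] i + τ) ω) :=
    measurable_pi_lambda _ (fun i => hmeas _ _)
  have hψ : Measurable (fun ω => fun i : Fin 4 =>
      Z (![s₁, s₂, s₃, s₄] i) (![t₁, t₂, t₃, t₄] i) ω) :=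
    measurable_pi_lambda _ (fun i => hmeas _ _)
  have hg : Measurable (fun v : Fin 4 → ℝ => (v 0 * v 1) * (v 2 * v 3)) :=
    ((measurable_pi_apply 0).mul (measurable_pi_apply 1)).mul
      ((measurable_pi_apply 2).mul (measurable_pi_apply 3))
  have := integral_comp_eq_of_map_eq' hφ hψ hmap hg
  simpa [Matrix.cons_val_zero, Matrix.cons_val_one, Matrix.head_cons,
    Matrix.cons_val_two, Matrix.cons_val_three, Matrix.tail_cons] using this

lemma shift2' (hmeas : ∀ s t, Measurable (Z s t)) (hstat : TimeStationary P S Z)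
    {s₁ s₂ : ℝ × ℝ} (h₁ : s₁ ∈ S) (h₂ : s₂ ∈ S) (t₁ t₂ τ : ℤ) :
    ∫ ω, Z s₁ (t₁ + τ) ω * Z s₂ (t₂ + τ) ω ∂P = ∫ ω, Z s₁ t₁ ω * Z s₂ t₂ ω ∂P := by
  have hmap := hstat 2 ![s₁, s₂] ![t₁, t₂] τ (by intro k; fin_cases k <;> assumption)
  have hφ : Measurable (fun ω => fun i : Fin 2 => Z (![s₁, s₂] i) (![t₁, t₂] i + τ) ω) :=
    measurable_pi_lambda _ (fun i => hmeas _ _)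
  have hψ : Measurable (fun ω => fun i : Fin 2 => Z (![s₁, s₂] i) (![t₁, t₂] i) ω) :=
    measurable_pi_lambda _ (fun i => hmeas _ _)
  have hg : Measurable (fun v : Fin 2 → ℝ => v 0 * v 1) :=
    (measurable_pi_apply 0).mul (measurable_pi_apply 1)
  have := integral_comp_eq_of_map_eq' hφ hψ hmap hg
  simpa [Matrix.cons_val_zero, Matrix.cons_val_one, Matrix.head_cons] using this

end Aux

/-! ### Counting lemmas -/

/-- The number of pairs `(t₁,t₂) ∈ [1,n−a] × [1,n−b]` with `t₂ − t₁ = t`. -/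
def cnt' (a b n : ℕ) (t : ℤ) : ℕ :=
  ((Finset.Icc (1:ℤ) ((n:ℤ) - a)).filter (fun t₁ => t₁ + t ∈ Finset.Icc (1:ℤ) ((n:ℤ) - b))).card

lemma cnt'_eq (a b n : ℕ) (t : ℤ) :
    cnt' a b n t = (min ((n:ℤ)-a) ((n:ℤ)-b-t) + 1 - max 1 (1-t)).toNat := by
  unfold cnt'
  rw [show (Finset.Icc (1:ℤ) ((n:ℤ) - a)).filter (fun t₁ => t₁ + t ∈ Finset.Icc (1:ℤ) ((n:ℤ) - b))
      = Finset.Icc (max 1 (1-t)) (min ((n:ℤ)-a) ((n:ℤ)-b-t)) by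
    ext x; simp only [Finset.mem_filter, Finset.mem_Icc, le_min_iff, max_le_iff]; omega]
  rw [Int.card_Icc]

lemma cnt'_le (a b n : ℕ) (t : ℤ) : (cnt' a b n t : ℤ) ≤ n := by
  rw [cnt'_eq]; omega

lemma cnt'_tendsto (a b : ℕ) (t : ℤ) :
    Tendsto (fun n : ℕ => (cnt' a b n t : ℝ) / n) atTop (𝓝 1) := by
  set K : ℤ := max (a:ℤ) ((b:ℤ)+t) - 1 + max 1 (1-t) with hK
  have hev : (fun n : ℕ => (cnt' a b n t : ℝ) / n) =ᶠ[atTop]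
      (fun n : ℕ => 1 - (K:ℝ)/n) := by
    filter_upwards [eventually_ge_atTop (a + b + t.natAbs + 2)] with n hn
    have hn' : (a + b + t.natAbs + 2 : ℤ) ≤ (n:ℤ) := by exact_mod_cast hn
    have hc : (cnt' a b n t : ℤ) = (n:ℤ) - K := by
      rw [cnt'_eq, Int.toNat_of_nonneg (by omega)]; omega
    have hn0 : (n:ℝ) ≠ 0 := by
      have : 0 < n := by omega
      exact Nat.cast_ne_zero.mpr this.ne'
    have hcr : (cnt' a b n t : ℝ) = (n:ℝ) - K := by
      have := congrArg (fun z : ℤ => (z:ℝ)) hc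
      push_cast at this ⊢; linarith
    show (cnt' a b n t : ℝ) / n = 1 - (K:ℝ)/n
    rw [hcr, sub_div, div_self hn0]
  have h0 : Tendsto (fun n : ℕ => (K:ℝ)/n) atTop (𝓝 0) := tendsto_const_div_atTop_nhds_zero_nat _
  exact Tendsto.congr' hev.symm (by simpa using tendsto_const_nhds.sub h0)

lemma doubleSum_eq_tsum' (F : ℤ → ℝ) (I J : Finset ℤ) :
    ∑ t₁ ∈ I, ∑ t₂ ∈ J, F (t₂ - t₁) =
      ∑' t : ℤ, ((I.filter (fun t₁ => t₁ + t ∈ J)).card : ℝ) * F t := by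
  classical
  set E : Finset ℤ := (I ×ˢ J).image (fun p => p.2 - p.1) with hE
  rw [tsum_eq_sum (s := E) ?h0]
  · have key : ∀ t ∈ E, ((I.filter (fun t₁ => t₁ + t ∈ J)).card : ℝ) * F t
        = ∑ t₁ ∈ I, if t₁ + t ∈ J then F t else 0 := by
      intro t _
      rw [← Finset.sum_filter, Finset.sum_const, nsmul_eq_mul]
    have main : ∑ t ∈ E, ((I.filter (fun t₁ => t₁ + t ∈ J)).card : ℝ) * F t
        = ∑ t₁ ∈ I, ∑ t₂ ∈ J, F (t₂ - t₁) := by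
      rw [Finset.sum_congr rfl key, Finset.sum_comm]
      refine Finset.sum_congr rfl fun t₁ ht₁ => ?_
      rw [← Finset.sum_filter]
      have hfe : E.filter (fun t => t₁ + t ∈ J) = J.image (fun t₂ => t₂ - t₁) := by
        ext x
        simp only [Finset.mem_filter, Finset.mem_image, hE, Finset.mem_product,
          Prod.exists]
        constructor
        · rintro ⟨-, hx⟩; exact ⟨t₁ + x, hx, by ring⟩
        · rintro ⟨t₂, ht₂, rfl⟩
          refine ⟨⟨t₁, t₂, ⟨ht₁, ht₂⟩, rfl⟩, by simpa using ht₂⟩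
      rw [hfe, Finset.sum_image (fun x _ y _ hxy => by omega)]
    exact main.symm
  · intro t ht
    have : (I.filter (fun t₁ => t₁ + t ∈ J)) = ∅ := by
      rw [Finset.filter_eq_empty_iff]
      intro t₁ ht₁ hmem
      exact ht (Finset.mem_image.mpr ⟨(t₁, t₁ + t), Finset.mem_product.mpr ⟨ht₁, hmem⟩, by ring⟩)
    simp [this]

lemma time_limit' (F : ℤ → ℝ) (hF : Summable (fun t => |F t|)) (a b : ℕ) :
    Tendsto (fun n : ℕ => (n:ℝ)⁻¹ *
        ∑ t₁ ∈ Finset.Icc (1:ℤ) ((n:ℤ)-a), ∑ t₂ ∈ Finset.Icc (1:ℤ) ((n:ℤ)-b), F (t₂ - t₁))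
      atTop (𝓝 (∑' t : ℤ, F t)) := by
  have heq : ∀ n : ℕ, (n:ℝ)⁻¹ *
      (∑ t₁ ∈ Finset.Icc (1:ℤ) ((n:ℤ)-a), ∑ t₂ ∈ Finset.Icc (1:ℤ) ((n:ℤ)-b), F (t₂ - t₁))
      = ∑' t : ℤ, ((cnt' a b n t : ℝ)/n) * F t := by
    intro n
    rw [doubleSum_eq_tsum', ← tsum_mul_left]
    congr 1; funext t
    show (n:ℝ)⁻¹ * ((cnt' a b n t : ℝ) * F t) = ((cnt' a b n t : ℝ)/n) * F t
    ring
  simp only [heq]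
  have hone : (∑' t : ℤ, F t) = ∑' t : ℤ, (1 : ℝ) * F t := by simp
  rw [hone]
  refine tendsto_tsum_of_dominated_convergence hF
    (fun t => (cnt'_tendsto a b t).mul_const (F t)) ?_
  filter_upwards [eventually_ge_atTop 1] with n hn t
  have hn0 : (0:ℝ) < n := by exact_mod_cast hn
  have h1 : (cnt' a b n t : ℝ)/n ≤ 1 := by
    rw [div_le_one hn0]
    exact_mod_cast cnt'_le a b n t
  have h2 : (0:ℝ) ≤ (cnt' a b n t : ℝ)/n := by positivity
  rw [Real.norm_eq_abs, abs_mul, abs_of_nonneg h2]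
  exact mul_le_of_le_one_left (abs_nonneg _) h1

/-- first part of Theorem 2. For a mean-zero random field on `S × ℤ`,
strictly stationary in time with space–time covariance function `C`, under absolute
summability in time of the covariances of products, `|Tₙ|·cov(Ĉₙ(hᵢ,uᵢ), Ĉₙ(hⱼ,uⱼ))`
converges to the stated triple sum for each pair of lags in `Λ`. -/
theorem asymptotic_covariance_matrix_fixed_space
    {Ω : Type*} [MeasurableSpace Ω] (P : Measure Ω) [IsProbabilityMeasure P]
    (S : Finset (ℝ × ℝ)) (Z : (ℝ × ℝ) → ℤ → Ω → ℝ)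
    (hmeas : ∀ s t, Measurable (Z s t))
    (hstat : TimeStationary P S Z)
    (hmean : ∀ s ∈ S, ∀ t : ℤ, ∫ ω, Z s t ω ∂P = 0)
    (hmom4 : ∀ s ∈ S, ∀ t : ℤ, MemLp (Z s t) 4 P)
    (C : (ℝ × ℝ) → ℤ → ℝ)
    (hcov : ∀ s h (t u : ℤ), s ∈ S → s + h ∈ S →
      covRV P (Z s t) (Z (s + h) (t + u)) = C h u)
    (m : ℕ) (h : Fin m → ℝ × ℝ) (u : Fin m → ℕ)
    (hne : ∀ i, (spatialLagSet S (h i)).Nonempty)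
    (hsum : ∀ i j : Fin m, ∀ s₁ ∈ spatialLagSet S (h i), ∀ s₂ ∈ spatialLagSet S (h j),
      Summable (fun t : ℤ =>
        |covRV P (fun ω => Z s₁ 0 ω * Z (s₁ + h i) (u i : ℤ) ω)
          (fun ω => Z s₂ t ω * Z (s₂ + h j) (t + (u j : ℤ)) ω)|)) :
    ∀ i j : Fin m,
      Tendsto (fun n : ℕ => (n : ℝ) *
          covRV P (covEstST Z S (h i) (u i) n) (covEstST Z S (h j) (u j) n)) atTop
        (𝓝 ((((spatialLagSet S (h i)).card : ℝ) * ((spatialLagSet S (h j)).card : ℝ))⁻¹ *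
          ∑ s₁ ∈ spatialLagSet S (h i), ∑ s₂ ∈ spatialLagSet S (h j),
            ∑' t : ℤ, covRV P (fun ω => Z s₁ 0 ω * Z (s₁ + h i) (u i : ℤ) ω)
              (fun ω => Z s₂ t ω * Z (s₂ + h j) (t + (u j : ℤ)) ω))) := by
  intro i j
  classical
  have memA : ∀ s ∈ spatialLagSet S (h i), s ∈ S ∧ s + h i ∈ S := by
    intro s hs
    simpa [spatialLagSet, Finset.mem_filter] using hs
  have memB : ∀ s ∈ spatialLagSet S (h j), s ∈ S ∧ s + h j ∈ S := by
    intro s hs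
    simpa [spatialLagSet, Finset.mem_filter] using hs
  -- Integrability facts
  have hq4 : (2:ℝ≥0∞)⁻¹ = 4⁻¹ + 4⁻¹ := by
    rw [show (2:ℝ≥0∞) = ((2:ℝ≥0):ℝ≥0∞) by norm_num, show (4:ℝ≥0∞) = ((4:ℝ≥0):ℝ≥0∞) by norm_num,
      ← ENNReal.coe_inv (by norm_num), ← ENNReal.coe_inv (by norm_num), ← ENNReal.coe_add,
      ENNReal.coe_inj]
    rw [← NNReal.coe_inj]; push_cast; norm_num
  have hq2 : (1:ℝ≥0∞) = 2⁻¹ + 2⁻¹ := ENNReal.inv_two_add_inv_two.symm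
  have hL2 : ∀ s ∈ S, ∀ s' ∈ S, ∀ t t' : ℤ,
      MemLp (fun ω => Z s t ω * Z s' t' ω) 2 P := by
    intro s hs s' hs' t t'
    exact (hmom4 s' hs' t').smul (φ := Z s t) (hmom4 s hs t) (hpqr := ⟨hq4.symm⟩)
  have hIntY : ∀ s ∈ S, ∀ s' ∈ S, ∀ t t' : ℤ,
      Integrable (fun ω => Z s t ω * Z s' t' ω) P := by
    intro s hs s' hs' t t'
    exact (hL2 s hs s' hs' t t').integrable one_le_two
  have hIntYX : ∀ s₁ ∈ S, ∀ s₁' ∈ S, ∀ s₂ ∈ S, ∀ s₂' ∈ S, ∀ t₁ t₁' t₂ t₂' : ℤ,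
      Integrable (fun ω => (Z s₁ t₁ ω * Z s₁' t₁' ω) * (Z s₂ t₂ ω * Z s₂' t₂' ω)) P := by
    intro s₁ hs₁ s₁' hs₁' s₂ hs₂ s₂' hs₂' t₁ t₁' t₂ t₂'
    exact memLp_one_iff_integrable.mp
      ((hL2 s₂ hs₂ s₂' hs₂' t₂ t₂').smul (φ := fun ω => Z s₁ t₁ ω * Z s₁' t₁' ω)
        (hL2 s₁ hs₁ s₁' hs₁' t₁ t₁') (hpqr := ⟨by rw [inv_one]; exact hq2.symm⟩))
  -- Stationarity: the covariance depends only on the time difference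
  have hkey : ∀ s₁ ∈ spatialLagSet S (h i), ∀ s₂ ∈ spatialLagSet S (h j), ∀ t₁ t₂ : ℤ,
      covRV P (fun ω => Z s₁ t₁ ω * Z (s₁ + h i) (t₁ + (u i : ℤ)) ω)
          (fun ω => Z s₂ t₂ ω * Z (s₂ + h j) (t₂ + (u j : ℤ)) ω)
      = covRV P (fun ω => Z s₁ 0 ω * Z (s₁ + h i) (u i : ℤ) ω)
          (fun ω => Z s₂ (t₂ - t₁) ω * Z (s₂ + h j) ((t₂ - t₁) + (u j : ℤ)) ω) := by
    intro s₁ hs₁ s₂ hs₂ t₁ t₂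
    obtain ⟨hs₁S, hs₁S'⟩ := memA s₁ hs₁
    obtain ⟨hs₂S, hs₂S'⟩ := memB s₂ hs₂
    have h4 := shift4' hmeas hstat hs₁S hs₁S' hs₂S hs₂S'
      0 (u i : ℤ) (t₂ - t₁) (t₂ - t₁ + (u j : ℤ)) t₁
    rw [show (0:ℤ) + t₁ = t₁ by ring, show ((u i : ℤ)) + t₁ = t₁ + (u i : ℤ) by ring,
      show t₂ - t₁ + t₁ = t₂ by ring,
      show t₂ - t₁ + (u j : ℤ) + t₁ = t₂ + (u j : ℤ) by ring] at h4
    have h2a := shift2' hmeas hstat hs₁S hs₁S' 0 (u i : ℤ) t₁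
    rw [show (0:ℤ) + t₁ = t₁ by ring,
      show ((u i : ℤ)) + t₁ = t₁ + (u i : ℤ) by ring] at h2a
    have h2b := shift2' hmeas hstat hs₂S hs₂S' (t₂ - t₁) (t₂ - t₁ + (u j : ℤ)) t₁
    rw [show t₂ - t₁ + t₁ = t₂ by ring,
      show t₂ - t₁ + (u j : ℤ) + t₁ = t₂ + (u j : ℤ) by ring] at h2b
    simp only [covRV]
    rw [h4, h2a, h2b]
  -- Expansion of the covariance of the estimators
  have hexp : ∀ n : ℕ,
      covRV P (covEstST Z S (h i) (u i) n) (covEstST Z S (h j) (u j) n)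
      = (((spatialLagSet S (h i)).card : ℝ) * (n:ℝ))⁻¹ *
        (((spatialLagSet S (h j)).card : ℝ) * (n:ℝ))⁻¹ *
        ∑ s₁ ∈ spatialLagSet S (h i), ∑ s₂ ∈ spatialLagSet S (h j),
          ∑ t₁ ∈ Finset.Icc (1:ℤ) ((n:ℤ) - (u i : ℤ)),
            ∑ t₂ ∈ Finset.Icc (1:ℤ) ((n:ℤ) - (u j : ℤ)),
              covRV P (fun ω => Z s₁ 0 ω * Z (s₁ + h i) (u i : ℤ) ω)
                (fun ω => Z s₂ (t₂ - t₁) ω * Z (s₂ + h j) ((t₂ - t₁) + (u j : ℤ)) ω) := by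
    intro n
    have e1 : covEstST Z S (h i) (u i) n = fun ω =>
        (((spatialLagSet S (h i)).card : ℝ) * (n:ℝ))⁻¹ *
          ∑ p ∈ (spatialLagSet S (h i)) ×ˢ Finset.Icc (1:ℤ) ((n:ℤ) - (u i : ℤ)),
            (fun (p : (ℝ × ℝ) × ℤ) (ω : Ω) => Z p.1 p.2 ω * Z (p.1 + h i) (p.2 + (u i : ℤ)) ω)
              p ω := by
      funext ω
      rw [covEstST, Finset.sum_product]
    have e2 : covEstST Z S (h j) (u j) n = fun ω =>
        (((spatialLagSet S (h j)).card : ℝ) * (n:ℝ))⁻¹ *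
          ∑ p ∈ (spatialLagSet S (h j)) ×ˢ Finset.Icc (1:ℤ) ((n:ℤ) - (u j : ℤ)),
            (fun (p : (ℝ × ℝ) × ℤ) (ω : Ω) => Z p.1 p.2 ω * Z (p.1 + h j) (p.2 + (u j : ℤ)) ω)
              p ω := by
      funext ω
      rw [covEstST, Finset.sum_product]
    rw [e1, e2, covRV_const_mul',
      covRV_sum_sum' _ _ _ _
        (fun p hp => by
          obtain ⟨h1, -⟩ := Finset.mem_product.mp hp
          obtain ⟨ha, hb⟩ := memA p.1 h1
          exact hIntY _ ha _ hb _ _)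
        (fun q hq => by
          obtain ⟨h1, -⟩ := Finset.mem_product.mp hq
          obtain ⟨ha, hb⟩ := memB q.1 h1
          exact hIntY _ ha _ hb _ _)
        (fun p hp q hq => by
          obtain ⟨h1, -⟩ := Finset.mem_product.mp hp
          obtain ⟨ha, hb⟩ := memA p.1 h1
          obtain ⟨h1', -⟩ := Finset.mem_product.mp hq
          obtain ⟨ha', hb'⟩ := memB q.1 h1'
          exact hIntYX _ ha _ hb _ ha' _ hb' _ _ _ _)]
    congr 1
    rw [Finset.sum_product]
    refine Finset.sum_congr rfl fun s₁ hs₁ => ?_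
    simp only [Finset.sum_product]
    rw [Finset.sum_comm]
    refine Finset.sum_congr rfl fun s₂ hs₂ => ?_
    refine Finset.sum_congr rfl fun t₁ ht₁ => ?_
    refine Finset.sum_congr rfl fun t₂ ht₂ => ?_
    exact hkey s₁ hs₁ s₂ hs₂ t₁ t₂
  -- Final assembly
  have hA0 : ((spatialLagSet S (h i)).card : ℝ) ≠ 0 := by
    exact_mod_cast (Finset.card_pos.mpr (hne i)).ne'
  have hB0 : ((spatialLagSet S (h j)).card : ℝ) ≠ 0 := by
    exact_mod_cast (Finset.card_pos.mpr (hne j)).ne'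
  have hev : (fun n : ℕ =>
      (((spatialLagSet S (h i)).card : ℝ) * ((spatialLagSet S (h j)).card : ℝ))⁻¹ *
        ∑ s₁ ∈ spatialLagSet S (h i), ∑ s₂ ∈ spatialLagSet S (h j),
          ((n:ℝ)⁻¹ * ∑ t₁ ∈ Finset.Icc (1:ℤ) ((n:ℤ) - (u i : ℤ)),
            ∑ t₂ ∈ Finset.Icc (1:ℤ) ((n:ℤ) - (u j : ℤ)),
              covRV P (fun ω => Z s₁ 0 ω * Z (s₁ + h i) (u i : ℤ) ω)
                (fun ω => Z s₂ (t₂ - t₁) ω * Z (s₂ + h j) ((t₂ - t₁) + (u j : ℤ)) ω)))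
      =ᶠ[atTop] (fun n : ℕ => (n : ℝ) *
        covRV P (covEstST Z S (h i) (u i) n) (covEstST Z S (h j) (u j) n)) := by
    filter_upwards [eventually_ge_atTop 1] with n hn
    have hn0 : (n:ℝ) ≠ 0 := by
      have : 0 < n := hn
      exact Nat.cast_ne_zero.mpr this.ne'
    rw [hexp n]
    simp_rw [← Finset.mul_sum]
    field_simp
  refine Tendsto.congr' hev ?_
  exact Tendsto.const_mul _ (tendsto_finset_sum _ (fun s₁ hs₁ =>
    tendsto_finset_sum _ (fun s₂ hs₂ =>
      time_limit' _ (hsum i j s₁ hs₁ s₂ hs₂) (u i) (u j))))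
end
end

section
/- Let Z : ℤ^d → Ω → ℝ be a strictly stationary random field with mean μ = E[Z(0)], observed on finite index sets Dₙ ⊂ ℤ^d with |Dₙ| → ∞, and let Λ = {k₁,…,k_m} ⊂ ℤ^d be a finite set of lags. Let Z̄ₙ = (1/|Dₙ|) Σ_{x∈Dₙ} Z(x), and for k ∈ Λ define the μ-centered estimator Ĉₙ(k) = (1/|Dₙ(k)|) Σ_{x∈Dₙ(k)} (Z(x) − μ)(Z(x+k) − μ) and the mean-corrected estimator Ĉₙ*(k) = (1/|Dₙ(k)|) Σ_{x∈Dₙ(k)} (Z(x) − Z̄ₙ)(Z(x+k) − Z̄ₙ), with Ĝₙ = (Ĉₙ(kᵢ))ᵢ and Ĝₙ* = (Ĉₙ*(kᵢ))ᵢ. Suppose that √|Dₙ| (Ĝₙ − G) converges in distribution to N_m(0,Σ) and that √|Dₙ| (Z̄ₙ − μ) converges in distribution to N(0, σ²_{Z̄}) for some σ²_{Z̄} ≥ 0. Then √|Dₙ| (Ĝₙ* − G) also converges in distribution to N_m(0,Σ); that is, the mean-corrected vector of sample covariances has the same asymptotic distribution as the vector computed with known mean. -/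
open MeasureTheory ProbabilityTheory Filter Finset Topology Metric

set_option linter.unusedSectionVars false
set_option maxHeartbeats 1000000

noncomputable section

/-- Cramér–Wold characterization of the centered Gaussian `N_m(0,S)` on `ℝ^m`. -/
def IsCenteredGaussianCov {m : ℕ} (μ : Measure (Fin m → ℝ))
    (S : Matrix (Fin m) (Fin m) ℝ) : Prop :=
  IsProbabilityMeasure μ ∧ ∀ l : Fin m → ℝ,
    Measure.map (fun y => ∑ i, l i * y i) μ =
      gaussianReal 0 (Real.toNNReal (∑ i, ∑ j, l i * S i j * l j))

namespace SlutskyAux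

section Infra
variable {Ω : Type*} [MeasurableSpace Ω] (P : Measure Ω) [IsProbabilityMeasure P]

def TendstoInProb (U : ℕ → Ω → ℝ) : Prop :=
  ∀ ε > 0, Tendsto (fun n => (P {ω | ε ≤ |U n ω|}).toReal) atTop (𝓝 0)

def TightSeq (W : ℕ → Ω → ℝ) : Prop :=
  ∀ ε > 0, ∃ M > 0, ∀ᶠ n in atTop, (P {ω | M ≤ |W n ω|}).toReal ≤ ε

lemma tendsto_zero_of_forall_eventually_le {v : ℕ → ℝ} (h0 : ∀ n, 0 ≤ v n)
    (h : ∀ ε > 0, ∀ᶠ n in atTop, v n ≤ ε) : Tendsto v atTop (𝓝 0) := by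
  refine tendsto_order.2 ⟨fun b hb => ?_, fun b hb => ?_⟩
  · exact Eventually.of_forall fun n => lt_of_lt_of_le hb (h0 n)
  · filter_upwards [h (b/2) (by linarith)] with n hn; linarith

/-- tight sequence times one converging in probability to zero converges in probability to 0. -/
lemma TightSeq.mul_tendstoInProb {W V : ℕ → Ω → ℝ} (hW : TightSeq P W)
    (hV : TendstoInProb P V) : TendstoInProb P (fun n ω => W n ω * V n ω) := by
  intro ε hε
  refine tendsto_zero_of_forall_eventually_le (fun n => ENNReal.toReal_nonneg) (fun δ hδ => ?_)
  obtain ⟨M, hM, hMev⟩ := hW (δ/2) (by linarith)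
  have hVev : ∀ᶠ n in atTop, (P {ω | ε/M ≤ |V n ω|}).toReal ≤ δ/2 := by
    have := hV (ε/M) (by positivity)
    have h2 : (0:ℝ) < δ/2 := by linarith
    filter_upwards [(NormedAddCommGroup.tendsto_nhds_zero.mp this) (δ/2) h2] with n hn
    have := le_of_lt hn
    rwa [Real.norm_eq_abs, abs_of_nonneg ENNReal.toReal_nonneg] at this
  filter_upwards [hMev, hVev] with n h1 h2
  have hsub : {ω : Ω | ε ≤ |W n ω * V n ω|} ⊆ {ω | M ≤ |W n ω|} ∪ {ω | ε/M ≤ |V n ω|} := by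
    intro ω hw
    by_contra hcon
    simp only [Set.mem_union, Set.mem_setOf_eq, not_or, not_le] at hcon
    obtain ⟨hA, hB⟩ := hcon
    simp only [Set.mem_setOf_eq, abs_mul] at hw
    have : |W n ω| * |V n ω| < M * (ε/M) := by
      apply mul_lt_mul'' hA hB (abs_nonneg _) (abs_nonneg _)
    rw [mul_div_cancel₀ _ (ne_of_gt hM)] at this
    linarith
  calc (P {ω : Ω | ε ≤ |W n ω * V n ω|}).toReal
      ≤ ((P {ω | M ≤ |W n ω|}) + P {ω | ε/M ≤ |V n ω|}).toReal :=
        ENNReal.toReal_mono (by finiteness)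
          (le_trans (measure_mono hsub) (measure_union_le _ _))
    _ = (P {ω | M ≤ |W n ω|}).toReal + (P {ω | ε/M ≤ |V n ω|}).toReal :=
        ENNReal.toReal_add (measure_ne_top P _) (measure_ne_top P _)
    _ ≤ δ/2 + δ/2 := add_le_add h1 h2
    _ = δ := by ring

/-- a convergent deterministic sequence is tight. -/
lemma tightSeq_of_det {c : ℕ → ℝ} {l : ℝ} (hc : Tendsto c atTop (𝓝 l)) :
    TightSeq P (fun n _ => c n) := by
  intro ε hε
  refine ⟨|l| + 1, by positivity, ?_⟩
  have : ∀ᶠ n in atTop, |c n| < |l| + 1 := by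
    have h1 : Tendsto (fun n => |c n|) atTop (𝓝 |l|) := hc.abs
    exact h1.eventually_lt_const (by linarith)
  filter_upwards [this] with n hn
  have : {ω : Ω | |l| + 1 ≤ |c n|} = (∅ : Set Ω) := by
    ext ω; simp only [Set.mem_setOf_eq, Set.mem_empty_iff_false, iff_false, not_le]; exact hn
  rw [this]; simp [hε.le]

/-- Markov: if first absolute moments tend to zero, we get convergence in probability. -/
lemma tendstoInProb_of_integral_abs {U : ℕ → Ω → ℝ} {e : ℕ → ℝ}
    (hint : ∀ n, Integrable (U n) P)
    (hbd : ∀ n, (∫ ω, |U n ω| ∂P) ≤ e n) (he : Tendsto e atTop (𝓝 0)) :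
    TendstoInProb P U := by
  intro ε hε
  have key : ∀ n, (P {ω | ε ≤ |U n ω|}).toReal ≤ e n / ε := by
    intro n
    have hm := mul_meas_ge_le_integral_of_nonneg
      (Eventually.of_forall (fun ω => abs_nonneg (U n ω))) (hint n).abs ε
    rw [le_div_iff₀ hε]
    calc (P {ω | ε ≤ |U n ω|}).toReal * ε = ε * (P {x | ε ≤ |U n x|}).toReal := by ring
      _ ≤ ∫ ω, |U n ω| ∂P := hm
      _ ≤ e n := hbd n
  refine squeeze_zero (fun n => ENNReal.toReal_nonneg) key ?_
  have : Tendsto (fun n => e n / ε) atTop (𝓝 (0 / ε)) := he.div_const ε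
  simpa using this



lemma TendstoInProb.congr {U V : ℕ → Ω → ℝ} (h : TendstoInProb P U)
    (hUV : ∀ n ω, U n ω = V n ω) : TendstoInProb P V := by
  have : U = V := funext fun n => funext fun ω => hUV n ω
  rwa [this] at h

lemma tendstoInProb_mono {U V : ℕ → Ω → ℝ} (h : TendstoInProb P V)
    (hle : ∀ n ω, |U n ω| ≤ |V n ω|) : TendstoInProb P U := by
  intro ε hε
  refine squeeze_zero (fun n => ENNReal.toReal_nonneg) (fun n => ?_) (h ε hε)
  refine ENNReal.toReal_mono (measure_ne_top P _) (measure_mono ?_)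
  exact fun ω hw => le_trans hw (hle n ω)

lemma tendstoInProb_of_det {c : ℕ → ℝ} (hc : Tendsto c atTop (𝓝 0)) :
    TendstoInProb P (fun n _ => c n) := by
  intro ε hε
  have hev : ∀ᶠ n in atTop, |c n| < ε := by
    have := (NormedAddCommGroup.tendsto_nhds_zero.mp hc) ε hε
    simpa using this
  refine tendsto_zero_of_forall_eventually_le (fun n => ENNReal.toReal_nonneg) (fun δ hδ => ?_)
  filter_upwards [hev] with n hn
  have : {ω : Ω | ε ≤ |c n|} = (∅ : Set Ω) := by
    ext ω; simp only [Set.mem_setOf_eq, Set.mem_empty_iff_false, iff_false, not_le]; exact hn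
  rw [this]
  simp [hδ.le]

lemma TendstoInProb.add {U V : ℕ → Ω → ℝ} (hU : TendstoInProb P U) (hV : TendstoInProb P V) :
    TendstoInProb P (fun n ω => U n ω + V n ω) := by
  intro ε hε
  have h2 : (0:ℝ) < ε/2 := by linarith
  refine squeeze_zero (fun n => ENNReal.toReal_nonneg) (fun n => ?_)
    (by simpa using (hU (ε/2) h2).add (hV (ε/2) h2))
  have hsub : {ω : Ω | ε ≤ |U n ω + V n ω|} ⊆ {ω | ε/2 ≤ |U n ω|} ∪ {ω | ε/2 ≤ |V n ω|} := by
    intro ω hw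
    by_contra hcon
    simp only [Set.mem_union, Set.mem_setOf_eq, not_or, not_le] at hcon
    have := abs_add_le (U n ω) (V n ω)
    simp only [Set.mem_setOf_eq] at hw
    obtain ⟨h1, h2'⟩ := hcon
    linarith
  calc (P {ω : Ω | ε ≤ |U n ω + V n ω|}).toReal
      ≤ (P ({ω | ε/2 ≤ |U n ω|} ∪ {ω | ε/2 ≤ |V n ω|})).toReal :=
        ENNReal.toReal_mono (measure_ne_top P _) (measure_mono hsub)
    _ ≤ ((P {ω | ε/2 ≤ |U n ω|}) + P {ω | ε/2 ≤ |V n ω|}).toReal :=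
        ENNReal.toReal_mono (by finiteness) (measure_union_le _ _)
    _ = (P {ω | ε/2 ≤ |U n ω|}).toReal + (P {ω | ε/2 ≤ |V n ω|}).toReal :=
        ENNReal.toReal_add (measure_ne_top P _) (measure_ne_top P _)


/-- A cutoff function: 0 on `[0, j]`, 1 outside `[-(j+1), j+1]`, as a bounded continuous fn. -/
def cutoff (j : ℝ) : BoundedContinuousFunction ℝ ℝ :=
  BoundedContinuousFunction.ofNormedAddCommGroup
    (fun y => min 1 (max (|y| - j) 0))
    (by fun_prop)
    1
    (by
      intro y
      rw [Real.norm_eq_abs, abs_of_nonneg (le_min zero_le_one (le_max_right _ _))]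
      · exact min_le_left _ _
      )

lemma cutoff_nonneg (j y : ℝ) : 0 ≤ cutoff j y :=
  le_min zero_le_one (le_max_right _ _)

lemma cutoff_le_one (j y : ℝ) : cutoff j y ≤ 1 := min_le_left _ _

lemma cutoff_eq_one {j y : ℝ} (h : j + 1 ≤ |y|) : cutoff j y = 1 := by
  have : (1:ℝ) ≤ max (|y| - j) 0 := le_max_of_le_left (by linarith)
  simp only [cutoff, BoundedContinuousFunction.coe_ofNormedAddCommGroup]
  exact min_eq_left this

lemma cutoff_eq_zero {j y : ℝ} (h : |y| ≤ j) : cutoff j y = 0 := by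
  simp only [cutoff, BoundedContinuousFunction.coe_ofNormedAddCommGroup]
  rw [max_eq_right (by linarith), min_eq_right zero_le_one]

lemma tightSeq_of_clt {W : ℕ → Ω → ℝ} (hWm : ∀ n, Measurable (W n))
    (γ : Measure ℝ) [IsProbabilityMeasure γ]
    (hconv : ∀ g : BoundedContinuousFunction ℝ ℝ,
      Tendsto (fun n => ∫ ω, g (W n ω) ∂P) atTop (𝓝 (∫ y, g y ∂γ))) :
    TightSeq P W := by
  intro ε hε
  -- find j with γ {y | j ≤ |y|} small
  have hshrink : Tendsto (fun j : ℕ => γ {y : ℝ | (j:ℝ) ≤ |y|}) atTop (𝓝 0) := by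
    have hiInter : ⋂ j : ℕ, {y : ℝ | (j:ℝ) ≤ |y|} = ∅ := by
      ext y
      simp only [Set.mem_iInter, Set.mem_setOf_eq, Set.mem_empty_iff_false, iff_false, not_forall,
        not_le]
      obtain ⟨j, hj⟩ := exists_nat_gt |y|
      exact ⟨j, hj⟩
    have := tendsto_measure_iInter_atTop (μ := γ) (s := fun j : ℕ => {y : ℝ | (j:ℝ) ≤ |y|})
      (fun j => ((measurableSet_le measurable_const continuous_abs.measurable).nullMeasurableSet))
      (fun i j hij => Set.setOf_subset_setOf.mpr (fun y hy =>
        le_trans (Nat.cast_le.mpr hij) hy))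
      ⟨0, measure_ne_top γ _⟩
    rwa [hiInter, measure_empty] at this
  have : ∀ᶠ j : ℕ in atTop, γ {y : ℝ | (j:ℝ) ≤ |y|} < ENNReal.ofReal (ε/2) := by
    exact hshrink.eventually_lt_const (by positivity)
  obtain ⟨j, hj⟩ := this.exists
  -- the cutoff test function
  set g := cutoff (j : ℝ) with hg
  have hlim : (∫ y, g y ∂γ) < ε := by
    have h1 : (∫ y, g y ∂γ) ≤ (γ {y : ℝ | (j:ℝ) ≤ |y|}).toReal := by
      have hmble : MeasurableSet {y : ℝ | (j:ℝ) ≤ |y|} :=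
        measurableSet_le measurable_const continuous_abs.measurable
      have : (∫ y, g y ∂γ) ≤ ∫ y, Set.indicator {y : ℝ | (j:ℝ) ≤ |y|} (fun _ => (1:ℝ)) y ∂γ := by
        apply integral_mono (g.integrable γ)
        · exact (integrable_indicator_iff hmble).mpr (integrableOn_const (measure_ne_top γ _))
        · intro y
          rw [Set.indicator_apply]
          by_cases hy : y ∈ {y : ℝ | (j:ℝ) ≤ |y|}
          · rw [if_pos hy]; exact cutoff_le_one _ _
          · rw [if_neg hy]
            simp only [Set.mem_setOf_eq, not_le] at hy
            exact le_of_eq (cutoff_eq_zero hy.le)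
      rwa [integral_indicator_const _ hmble, smul_eq_mul, mul_one] at this
    have h2 : (γ {y : ℝ | (j:ℝ) ≤ |y|}).toReal ≤ ε/2 := by
      have := hj.le
      calc (γ {y : ℝ | (j:ℝ) ≤ |y|}).toReal ≤ (ENNReal.ofReal (ε/2)).toReal :=
            ENNReal.toReal_mono (by finiteness) this
        _ = ε/2 := ENNReal.toReal_ofReal (by positivity)
    linarith
  refine ⟨(j:ℝ) + 1, by positivity, ?_⟩
  have hev : ∀ᶠ n in atTop, (∫ ω, g (W n ω) ∂P) < ε := (hconv g).eventually_lt_const hlim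
  filter_upwards [hev] with n hn
  -- P {ω | j+1 ≤ |W n ω|}.toReal ≤ ∫ g (W n ω)
  have hA : MeasurableSet {ω : Ω | (j:ℝ) + 1 ≤ |W n ω|} :=
    measurableSet_le measurable_const (hWm n).abs
  have hgW : Integrable (fun ω => g (W n ω)) P := by
    refine (integrable_const ‖g‖).mono' ((g.continuous.measurable.comp (hWm n)).aestronglyMeasurable) ?_
    exact Eventually.of_forall fun ω => g.norm_coe_le_norm (W n ω)
  have hind : (P {ω : Ω | (j:ℝ) + 1 ≤ |W n ω|}).toReal ≤ ∫ ω, g (W n ω) ∂P := by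
    have : (∫ ω, Set.indicator {ω : Ω | (j:ℝ) + 1 ≤ |W n ω|} (fun _ => (1:ℝ)) ω ∂P)
        ≤ ∫ ω, g (W n ω) ∂P := by
      apply integral_mono ((integrable_indicator_iff hA).mpr (integrableOn_const (measure_ne_top P _))) hgW
      intro ω
      rw [Set.indicator_apply]
      by_cases hy : ω ∈ {ω : Ω | (j:ℝ) + 1 ≤ |W n ω|}
      · rw [if_pos hy]
        exact le_of_eq (cutoff_eq_one hy).symm
      · rw [if_neg hy]
        exact cutoff_nonneg _ _
    rwa [integral_indicator_const _ hA, smul_eq_mul, mul_one] at this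
  linarith


/-- Key quantitative estimate: Lévy–Prokhorov distance between pushforwards is controlled by
closeness in probability. -/
lemma levyProkhorovEDist_map_le {E : Type*} [MeasurableSpace E] [PseudoMetricSpace E]
    [OpensMeasurableSpace E]
    {X Y : Ω → E} (hX : Measurable X) (hY : Measurable Y) {δ : ℝ} (hδ : 0 < δ)
    (h : P {ω | δ ≤ dist (X ω) (Y ω)} ≤ ENNReal.ofReal δ) :
    levyProkhorovEDist (P.map X) (P.map Y) ≤ ENNReal.ofReal δ := by
  apply levyProkhorovEDist_le_of_forall
  intro ε B hε hεtop hB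
  have hδε : δ < ε.toReal := by
    have := ENNReal.toReal_strict_mono hεtop.ne hε
    rwa [ENNReal.toReal_ofReal hδ.le] at this
  have hPd : P {ω | δ ≤ dist (X ω) (Y ω)} ≤ ε := le_trans h (by
    rw [← ENNReal.ofReal_toReal hεtop.ne]
    exact ENNReal.ofReal_le_ofReal hδε.le)
  constructor
  · rw [Measure.map_apply hX hB, Measure.map_apply hY isOpen_thickening.measurableSet]
    have hsub : X ⁻¹' B ⊆ (Y ⁻¹' thickening ε.toReal B) ∪ {ω | δ ≤ dist (X ω) (Y ω)} := by
      intro ω hω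
      by_cases hd : δ ≤ dist (X ω) (Y ω)
      · exact Or.inr hd
      · push_neg at hd
        left
        exact mem_thickening_iff.mpr ⟨X ω, hω, by rw [dist_comm]; linarith⟩
    calc P (X ⁻¹' B) ≤ P (Y ⁻¹' thickening ε.toReal B) + P {ω | δ ≤ dist (X ω) (Y ω)} :=
          le_trans (measure_mono hsub) (measure_union_le _ _)
      _ ≤ P (Y ⁻¹' thickening ε.toReal B) + ε := add_le_add_right hPd _
  · rw [Measure.map_apply hY hB, Measure.map_apply hX isOpen_thickening.measurableSet]
    have hsub : Y ⁻¹' B ⊆ (X ⁻¹' thickening ε.toReal B) ∪ {ω | δ ≤ dist (X ω) (Y ω)} := by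
      intro ω hω
      by_cases hd : δ ≤ dist (X ω) (Y ω)
      · exact Or.inr hd
      · push_neg at hd
        left
        exact mem_thickening_iff.mpr ⟨Y ω, hω, by linarith⟩
    calc P (Y ⁻¹' B) ≤ P (X ⁻¹' thickening ε.toReal B) + P {ω | δ ≤ dist (X ω) (Y ω)} :=
          le_trans (measure_mono hsub) (measure_union_le _ _)
      _ ≤ P (X ⁻¹' thickening ε.toReal B) + ε := add_le_add_right hPd _

/-- Slutsky-type lemma. -/
lemma slutsky {E : Type*} [MeasurableSpace E] [MetricSpace E] [BorelSpace E]
    [TopologicalSpace.SeparableSpace E] [TopologicalSpace.MetrizableSpace E]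
    {X Y : ℕ → Ω → E} (hX : ∀ n, Measurable (X n)) (hY : ∀ n, Measurable (Y n))
    (μ : Measure E) [IsProbabilityMeasure μ]
    (hXconv : ∀ f : BoundedContinuousFunction E ℝ,
      Tendsto (fun n => ∫ ω, f (X n ω) ∂P) atTop (𝓝 (∫ y, f y ∂μ)))
    (hprob : ∀ ε > 0, Tendsto (fun n => (P {ω | ε ≤ dist (X n ω) (Y n ω)}).toReal) atTop (𝓝 0)) :
    ∀ f : BoundedContinuousFunction E ℝ,
      Tendsto (fun n => ∫ ω, f (Y n ω) ∂P) atTop (𝓝 (∫ y, f y ∂μ)) := by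
  -- probability measures
  let μn : ℕ → ProbabilityMeasure E := fun n =>
    ⟨P.map (X n), Measure.isProbabilityMeasure_map (hX n).aemeasurable⟩
  let νn : ℕ → ProbabilityMeasure E := fun n =>
    ⟨P.map (Y n), Measure.isProbabilityMeasure_map (hY n).aemeasurable⟩
  let μ' : ProbabilityMeasure E := ⟨μ, inferInstance⟩
  have hμconv : Tendsto μn atTop (𝓝 μ') := by
    rw [ProbabilityMeasure.tendsto_iff_forall_integral_tendsto]
    intro f
    have : ∀ n, ∫ y, f y ∂(μn n : Measure E) = ∫ ω, f (X n ω) ∂P := fun n =>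
      integral_map (hX n).aemeasurable f.continuous.aestronglyMeasurable
    simp only [this]; exact hXconv f
  -- move to the Lévy-Prokhorov metric space
  let Φ := LevyProkhorov.probabilityMeasureHomeomorph (Ω := E)
  have hd2 : Tendsto (fun n => dist (Φ (μn n)) (Φ μ')) atTop (𝓝 0) :=
    tendsto_iff_dist_tendsto_zero.mp ((Φ.continuous.tendsto μ').comp hμconv)
  have hd1 : Tendsto (fun n => dist (Φ (νn n)) (Φ (μn n))) atTop (𝓝 0) := by
    refine tendsto_zero_of_forall_eventually_le (fun n => dist_nonneg) (fun ε hε => ?_)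
    have h2 : (0:ℝ) < ε/2 := by linarith
    have := (hprob (ε/2) h2).eventually_lt_const h2
    filter_upwards [this] with n hn
    have hP : P {ω | ε/2 ≤ dist (X n ω) (Y n ω)} ≤ ENNReal.ofReal (ε/2) := by
      rw [← ENNReal.ofReal_toReal (measure_ne_top P _)]
      exact ENNReal.ofReal_le_ofReal hn.le
    have hED := levyProkhorovEDist_map_le P (hX n) (hY n) h2 hP
    have : dist (Φ (νn n)) (Φ (μn n)) = levyProkhorovDist (P.map (Y n)) (P.map (X n)) := rfl
    rw [this, levyProkhorovDist, levyProkhorovEDist_comm]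
    calc (levyProkhorovEDist (P.map (X n)) (P.map (Y n))).toReal
        ≤ (ENNReal.ofReal (ε/2)).toReal := ENNReal.toReal_mono ENNReal.ofReal_ne_top hED
      _ = ε/2 := ENNReal.toReal_ofReal h2.le
      _ ≤ ε := by linarith
  have hνLP : Tendsto (fun n => Φ (νn n)) atTop (𝓝 (Φ μ')) := by
    rw [tendsto_iff_dist_tendsto_zero]
    refine squeeze_zero (fun n => dist_nonneg) (fun n => dist_triangle _ (Φ (μn n)) _) ?_
    simpa using hd1.add hd2
  have hνconv : Tendsto νn atTop (𝓝 μ') := by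
    have := (Φ.symm.continuous.tendsto (Φ μ')).comp hνLP
    exact this
  intro f
  have hint := ProbabilityMeasure.tendsto_iff_forall_integral_tendsto.mp hνconv f
  have : ∀ n, ∫ y, f y ∂(νn n : Measure E) = ∫ ω, f (Y n ω) ∂P := fun n =>
    integral_map (hY n).aemeasurable f.continuous.aestronglyMeasurable
  simp only [this] at hint; exact hint


end Infra

lemma key1 {V : Type*} (lag : Finset V) (g h : V → ℝ) (Zb μZ c r : ℝ)
    (hL0 : (0:ℝ) < (lag.card:ℝ)) :
    r * (((lag.card:ℝ))⁻¹ * (∑ x ∈ lag, (g x - Zb) * (h x - Zb)) - c)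
      = r * (((lag.card:ℝ))⁻¹ * (∑ x ∈ lag, (g x - μZ) * (h x - μZ)) - c)
        + (r * (Zb - μZ)) * ((Zb - μZ)
            - ((lag.card:ℝ))⁻¹ * ∑ x ∈ lag, ((g x - μZ) + (h x - μZ))) := by
  have hexp : ∑ x ∈ lag, (g x - Zb) * (h x - Zb)
      = ∑ x ∈ lag, (g x - μZ) * (h x - μZ)
        - (Zb - μZ) * (∑ x ∈ lag, ((g x - μZ) + (h x - μZ)))
        + (lag.card : ℝ) * (Zb - μZ)^2 := by
    rw [Finset.mul_sum, ← Finset.sum_sub_distrib]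
    have : (lag.card : ℝ) * (Zb - μZ)^2 = ∑ _x ∈ lag, (Zb - μZ)^2 := by
      rw [Finset.sum_const, nsmul_eq_mul]
    rw [this, ← Finset.sum_add_distrib]
    exact Finset.sum_congr rfl (fun x _ => by ring)
  rw [hexp]
  field_simp
  ring

lemma key2 {V : Type*} [AddCommGroup V] [DecidableEq V] (DD lag : Finset V) (kk : V)
    (hsub : lag ⊆ DD) (hsub2 : lag.image (· + kk) ⊆ DD)
    (hL0 : (0:ℝ) < (lag.card:ℝ)) (hN0 : (0:ℝ) < (DD.card:ℝ)) (g : V → ℝ) (μZ : ℝ) :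
    ((DD.card:ℝ)⁻¹ * ∑ x ∈ DD, g x - μZ)
      - ((lag.card:ℝ))⁻¹ * (∑ x ∈ lag, ((g x - μZ) + (g (x + kk) - μZ)))
    = (Real.sqrt (DD.card:ℝ) * ((DD.card:ℝ)⁻¹ * ∑ x ∈ DD, g x - μZ))
        * ((Real.sqrt (DD.card:ℝ))⁻¹ * (1 - 2*((DD.card:ℝ)/(lag.card:ℝ))))
      + ((lag.card:ℝ))⁻¹ * (∑ x ∈ DD \ lag, (g x - μZ))
      + ((lag.card:ℝ))⁻¹ * (∑ x ∈ DD \ lag.image (· + kk), (g x - μZ)) := by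
  have hsq : Real.sqrt (DD.card:ℝ) ≠ 0 := ne_of_gt (Real.sqrt_pos.mpr hN0)
  have hA : ∑ x ∈ lag, (g x - μZ)
      = ∑ x ∈ DD, (g x - μZ) - ∑ x ∈ DD \ lag, (g x - μZ) := by
    rw [← Finset.sum_sdiff hsub]; ring
  have hB : ∑ x ∈ lag, (g (x + kk) - μZ)
      = ∑ x ∈ DD, (g x - μZ) - ∑ x ∈ DD \ lag.image (· + kk), (g x - μZ) := by
    have himg : ∑ y ∈ lag.image (· + kk), (g y - μZ) = ∑ x ∈ lag, (g (x + kk) - μZ) :=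
      Finset.sum_image (fun a _ b _ hab => by
        have := add_left_injective kk hab; exact this)
    rw [← himg, ← Finset.sum_sdiff hsub2]; ring
  have hD : ∑ x ∈ DD, (g x - μZ)
      = (DD.card:ℝ) * ((DD.card:ℝ)⁻¹ * ∑ x ∈ DD, g x - μZ) := by
    rw [Finset.sum_sub_distrib, Finset.sum_const, nsmul_eq_mul]
    field_simp
  rw [Finset.sum_add_distrib, hA, hB, hD]
  field_simp
  ring


section Stat

lemma map_single_eq {Ω : Type*} [MeasurableSpace Ω] {P : Measure Ω} {d : ℕ}
    {Z : (Fin d → ℤ) → Ω → ℝ} (hmeas : ∀ x, Measurable (Z x))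
    (hstat : StrictlyStationary P Z) (x : Fin d → ℤ) :
    P.map (Z x) = P.map (Z 0) := by
  have h := hstat 1 (fun _ => 0) x
  have h0 : Measurable (fun v : Fin 1 → ℝ => v 0) := measurable_pi_apply 0
  have hf1 : Measurable (fun ω => fun i : Fin 1 => Z ((fun _ => (0:Fin d → ℤ)) i + x) ω) :=
    measurable_pi_lambda _ (fun _ => hmeas _)
  have hf2 : Measurable (fun ω => fun i : Fin 1 => Z ((fun _ => (0:Fin d → ℤ)) i) ω) :=
    measurable_pi_lambda _ (fun _ => hmeas _)
  have e1 : P.map (Z x) =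
      Measure.map (fun v : Fin 1 → ℝ => v 0)
        (Measure.map (fun ω => fun i : Fin 1 => Z ((fun _ => (0:Fin d → ℤ)) i + x) ω) P) := by
    rw [Measure.map_map h0 hf1]
    congr 1
    funext ω
    simp
  have e2 : P.map (Z 0) =
      Measure.map (fun v : Fin 1 → ℝ => v 0)
        (Measure.map (fun ω => fun i : Fin 1 => Z ((fun _ => (0:Fin d → ℤ)) i) ω) P) := by
    rw [Measure.map_map h0 hf2]
    rfl
  rw [e1, e2, h]

lemma integral_abs_sub_const_eq {Ω : Type*} [MeasurableSpace Ω] {P : Measure Ω} {d : ℕ}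
    {Z : (Fin d → ℤ) → Ω → ℝ} (hmeas : ∀ x, Measurable (Z x))
    (hstat : StrictlyStationary P Z) (μZ : ℝ) (x : Fin d → ℤ) :
    ∫ ω, |Z x ω - μZ| ∂P = ∫ ω, |Z 0 ω - μZ| ∂P := by
  have hc : AEStronglyMeasurable (fun y : ℝ => |y - μZ|) (P.map (Z 0)) :=
    (continuous_abs.comp (continuous_id.sub continuous_const)).aestronglyMeasurable
  have e1 : ∫ ω, |Z x ω - μZ| ∂P = ∫ y, |y - μZ| ∂(P.map (Z x)) :=
    (integral_map (hmeas x).aemeasurable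
      (by rw [map_single_eq hmeas hstat x]; exact hc)).symm
  have e2 : ∫ ω, |Z 0 ω - μZ| ∂P = ∫ y, |y - μZ| ∂(P.map (Z 0)) :=
    (integral_map (hmeas 0).aemeasurable hc).symm
  rw [e1, e2, map_single_eq hmeas hstat x]

end Stat

end SlutskyAux

open SlutskyAux in
/-- Lemma A.6. If the vector of `μ`-centered sample covariances
satisfies `√|Dₙ|(Ĝₙ − G) →d N_m(0,Σ)` and the sample mean satisfies
`√|Dₙ|(Z̄ₙ − μ) →d N(0,σ²_{Z̄})`, then the mean-corrected vector of sample covariances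
satisfies `√|Dₙ|(Ĝₙ* − G) →d N_m(0,Σ)` as well. -/
theorem mean_corrected_estimator_same_limit
    {Ω : Type*} [MeasurableSpace Ω] (P : Measure Ω) [IsProbabilityMeasure P]
    {d : ℕ} (Z : (Fin d → ℤ) → Ω → ℝ)
    (hmeas : ∀ x, Measurable (Z x))
    (hstat : StrictlyStationary P Z)
    (hL2 : ∀ x, MemLp (Z x) 2 P)
    (μZ : ℝ) (hmu : μZ = ∫ ω, Z 0 ω ∂P)
    (D : ℕ → Finset (Fin d → ℤ))
    (hcard : Tendsto (fun n => ((D n).card : ℝ)) atTop atTop)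
    (m : ℕ) (k : Fin m → (Fin d → ℤ))
    (hne : ∀ (i : Fin m) (n : ℕ), (lagSet (D n) (k i)).Nonempty)
    (hrat : ∀ i : Fin m,
      Tendsto (fun n => ((lagSet (D n) (k i)).card : ℝ) / ((D n).card : ℝ)) atTop (𝓝 1))
    (Sig : Matrix (Fin m) (Fin m) ℝ)
    (μlim : Measure (Fin m → ℝ))
    (hGauss : IsCenteredGaussianCov μlim Sig)
    (hG : ∀ f : BoundedContinuousFunction (Fin m → ℝ) ℝ,
      Tendsto (fun n => ∫ ω, f (fun i => Real.sqrt ((D n).card) *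
          ((((lagSet (D n) (k i)).card : ℝ)⁻¹ *
              ∑ x ∈ lagSet (D n) (k i), (Z x ω - μZ) * (Z (x + k i) ω - μZ)) -
            covRV P (Z 0) (Z (k i)))) ∂P) atTop
        (𝓝 (∫ y, f y ∂μlim)))
    (σ2 : ℝ) (hσ2 : 0 ≤ σ2)
    (hmeanCLT : ∀ g : BoundedContinuousFunction ℝ ℝ,
      Tendsto (fun n => ∫ ω, g (Real.sqrt ((D n).card) *
          ((((D n).card : ℝ)⁻¹ * ∑ x ∈ D n, Z x ω) - μZ)) ∂P) atTop
        (𝓝 (∫ y, g y ∂(gaussianReal 0 (Real.toNNReal σ2))))) :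
    ∀ f : BoundedContinuousFunction (Fin m → ℝ) ℝ,
      Tendsto (fun n => ∫ ω, f (fun i => Real.sqrt ((D n).card) *
          ((((lagSet (D n) (k i)).card : ℝ)⁻¹ *
              ∑ x ∈ lagSet (D n) (k i),
                (Z x ω - (((D n).card : ℝ)⁻¹ * ∑ y ∈ D n, Z y ω)) *
                  (Z (x + k i) ω - (((D n).card : ℝ)⁻¹ * ∑ y ∈ D n, Z y ω))) -
            covRV P (Z 0) (Z (k i)))) ∂P) atTop
        (𝓝 (∫ y, f y ∂μlim)) := by
  classical
  haveI hPμ : IsProbabilityMeasure μlim := hGauss.1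
  -- notation
  set X : ℕ → Ω → (Fin m → ℝ) := fun n ω => fun i => Real.sqrt ((D n).card) *
      ((((lagSet (D n) (k i)).card : ℝ)⁻¹ *
          ∑ x ∈ lagSet (D n) (k i), (Z x ω - μZ) * (Z (x + k i) ω - μZ)) -
        covRV P (Z 0) (Z (k i))) with hXdef
  set Y : ℕ → Ω → (Fin m → ℝ) := fun n ω => fun i => Real.sqrt ((D n).card) *
      ((((lagSet (D n) (k i)).card : ℝ)⁻¹ *
          ∑ x ∈ lagSet (D n) (k i),
            (Z x ω - (((D n).card : ℝ)⁻¹ * ∑ y ∈ D n, Z y ω)) *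
              (Z (x + k i) ω - (((D n).card : ℝ)⁻¹ * ∑ y ∈ D n, Z y ω))) -
        covRV P (Z 0) (Z (k i))) with hYdef
  set W : ℕ → Ω → ℝ := fun n ω => Real.sqrt ((D n).card) *
      ((((D n).card : ℝ)⁻¹ * ∑ x ∈ D n, Z x ω) - μZ) with hWdef
  set s : ℕ → Ω → ℝ := fun n ω => (((D n).card : ℝ)⁻¹ * ∑ x ∈ D n, Z x ω) - μZ with hsdef
  set T : ℕ → Fin m → Ω → ℝ := fun n i ω => (((lagSet (D n) (k i)).card : ℝ))⁻¹ *
      ∑ x ∈ lagSet (D n) (k i), ((Z x ω - μZ) + (Z (x + k i) ω - μZ)) with hTdef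
  -- basic facts
  have hsubs : ∀ n (i : Fin m), lagSet (D n) (k i) ⊆ D n := fun n i => Finset.filter_subset _ _
  have hsub2 : ∀ n (i : Fin m), (lagSet (D n) (k i)).image (· + k i) ⊆ D n := by
    intro n i y hy
    obtain ⟨x, hx, rfl⟩ := Finset.mem_image.mp hy
    exact (Finset.mem_filter.mp hx).2
  have hL0 : ∀ (i : Fin m) n, (0:ℝ) < ((lagSet (D n) (k i)).card : ℝ) := by
    intro i n; exact_mod_cast (hne i n).card_pos
  have hN0 : ∀ (i : Fin m) n, (0:ℝ) < ((D n).card : ℝ) := fun i n =>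
    lt_of_lt_of_le (hL0 i n) (Nat.cast_le.mpr (Finset.card_le_card (hsubs n i)))
  -- measurability
  have hZsum : ∀ (S : Finset (Fin d → ℤ)), Measurable (fun ω => ∑ x ∈ S, Z x ω) := by
    intro S; exact Finset.measurable_sum _ (fun x _ => hmeas x)
  have hWmeas : ∀ n, Measurable (W n) := by
    intro n
    exact (((hZsum (D n)).const_mul _).sub measurable_const).const_mul _
  have hXmeas : ∀ n, Measurable (X n) := by
    intro n
    refine measurable_pi_lambda _ (fun i => ?_)
    exact (((Finset.measurable_sum _ (fun x _ =>
        ((hmeas x).sub measurable_const).mul ((hmeas _).sub measurable_const))).const_mul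
        _).sub measurable_const).const_mul _
  have hYmeas : ∀ n, Measurable (Y n) := by
    intro n
    refine measurable_pi_lambda _ (fun i => ?_)
    have hZb : Measurable (fun ω => (((D n).card : ℝ)⁻¹ * ∑ y ∈ D n, Z y ω)) :=
      (hZsum (D n)).const_mul _
    exact (((Finset.measurable_sum _ (fun x _ =>
        ((hmeas x).sub hZb).mul ((hmeas _).sub hZb))).const_mul
        _).sub measurable_const).const_mul _
  -- integrability and stationarity
  have hZint : ∀ x, Integrable (fun ω => Z x ω - μZ) P :=
    fun x => ((hL2 x).integrable one_le_two).sub (integrable_const μZ)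
  set cμ : ℝ := ∫ ω, |Z 0 ω - μZ| ∂P with hcμdef
  have habs : ∀ x, ∫ ω, |Z x ω - μZ| ∂P = cμ := fun x =>
    integral_abs_sub_const_eq hmeas hstat μZ x
  -- ratio limits
  have hNL : ∀ i : Fin m, Tendsto
      (fun n => ((D n).card : ℝ) / ((lagSet (D n) (k i)).card : ℝ)) atTop (𝓝 1) := by
    intro i
    have h := (hrat i).inv₀ one_ne_zero
    simp only [inv_div, inv_one] at h
    exact h
  -- tightness of W
  have hWtight : TightSeq P W := tightSeq_of_clt P hWmeas
    (gaussianReal 0 (Real.toNNReal σ2)) hmeanCLT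
  -- residual terms tend to zero in probability
  have hRgen : ∀ (i : Fin m) (S : ℕ → Finset (Fin d → ℤ)),
      (∀ n, ((S n).card : ℝ) = ((D n).card : ℝ) - ((lagSet (D n) (k i)).card : ℝ)) →
      TendstoInProb P (fun n ω =>
        (((lagSet (D n) (k i)).card : ℝ))⁻¹ * ∑ x ∈ S n, (Z x ω - μZ)) := by
    intro i S hcardS
    have hcμ0 : 0 ≤ cμ := by rw [hcμdef]; exact integral_nonneg (fun ω => abs_nonneg _)
    apply tendstoInProb_of_integral_abs P
      (e := fun n => (((D n).card : ℝ) / ((lagSet (D n) (k i)).card : ℝ) - 1) * cμ)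
    · intro n
      exact (integrable_finset_sum _ (fun x _ => hZint x)).const_mul _
    · intro n
      have hLpos := hL0 i n
      have hptw : ∀ ω, |(((lagSet (D n) (k i)).card : ℝ))⁻¹ * ∑ x ∈ S n, (Z x ω - μZ)|
          ≤ (((lagSet (D n) (k i)).card : ℝ))⁻¹ * ∑ x ∈ S n, |Z x ω - μZ| := by
        intro ω
        rw [abs_mul, abs_of_nonneg (inv_nonneg.mpr hLpos.le)]
        exact mul_le_mul_of_nonneg_left (Finset.abs_sum_le_sum_abs _ _)
          (inv_nonneg.mpr hLpos.le)
      calc ∫ ω, |(((lagSet (D n) (k i)).card : ℝ))⁻¹ * ∑ x ∈ S n, (Z x ω - μZ)| ∂P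
          ≤ ∫ ω, (((lagSet (D n) (k i)).card : ℝ))⁻¹ * ∑ x ∈ S n, |Z x ω - μZ| ∂P := by
            apply integral_mono ((integrable_finset_sum _
              (fun x _ => hZint x)).const_mul _).abs
              ((integrable_finset_sum _ (fun x _ => (hZint x).abs)).const_mul _) hptw
        _ = (((lagSet (D n) (k i)).card : ℝ))⁻¹ * ∑ x ∈ S n, ∫ ω, |Z x ω - μZ| ∂P := by
            rw [integral_const_mul, integral_finset_sum _ (fun x _ => (hZint x).abs)]
        _ = (((lagSet (D n) (k i)).card : ℝ))⁻¹ * (((S n).card : ℝ) * cμ) := by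
            rw [Finset.sum_congr rfl (fun x _ => habs x), Finset.sum_const, nsmul_eq_mul]
        _ = (((D n).card : ℝ) / ((lagSet (D n) (k i)).card : ℝ) - 1) * cμ := by
            rw [hcardS n]; field_simp
    · have := ((hNL i).sub_const 1).mul_const cμ
      simpa using this
  have hR1 : ∀ i : Fin m, TendstoInProb P (fun n ω =>
      (((lagSet (D n) (k i)).card : ℝ))⁻¹ * ∑ x ∈ D n \ lagSet (D n) (k i), (Z x ω - μZ)) := by
    intro i
    apply hRgen i
    intro n
    rw [Finset.card_sdiff_of_subset (hsubs n i), Nat.cast_sub (Finset.card_le_card (hsubs n i))]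
  have hR2 : ∀ i : Fin m, TendstoInProb P (fun n ω =>
      (((lagSet (D n) (k i)).card : ℝ))⁻¹ *
        ∑ x ∈ D n \ (lagSet (D n) (k i)).image (· + k i), (Z x ω - μZ)) := by
    intro i
    apply hRgen i
    intro n
    rw [Finset.card_sdiff_of_subset (hsub2 n i), Nat.cast_sub (Finset.card_le_card (hsub2 n i)),
      Finset.card_image_of_injective _ (add_left_injective (k i))]
  -- deterministic coefficient tends to zero
  have hc1 : ∀ i : Fin m, Tendsto (fun n => (Real.sqrt ((D n).card))⁻¹ *
      (1 - 2*(((D n).card : ℝ) / ((lagSet (D n) (k i)).card : ℝ)))) atTop (𝓝 0) := by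
    intro i
    have hsqrtTop : Tendsto (fun n => Real.sqrt ((D n).card)) atTop atTop := by
      rw [Filter.tendsto_atTop]
      intro b
      filter_upwards [hcard.eventually_ge_atTop (max b 0 ^ 2)] with n hn
      calc b ≤ max b 0 := le_max_left _ _
        _ = Real.sqrt ((max b 0)^2) := (Real.sqrt_sq (le_max_right _ _)).symm
        _ ≤ _ := Real.sqrt_le_sqrt hn
    have hsqrt : Tendsto (fun n => (Real.sqrt ((D n).card))⁻¹) atTop (𝓝 0) :=
      hsqrtTop.inv_tendsto_atTop
    have h2 : Tendsto (fun n => 1 - 2*(((D n).card : ℝ) / ((lagSet (D n) (k i)).card : ℝ)))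
        atTop (𝓝 (1 - 2*1)) := tendsto_const_nhds.sub ((hNL i).const_mul 2)
    have := hsqrt.mul h2
    simpa using this
  -- s - T tends to zero in probability
  have hsT : ∀ i : Fin m, TendstoInProb P (fun n ω => s n ω - T n i ω) := by
    intro i
    have hcomb := TendstoInProb.add P
      (TightSeq.mul_tendstoInProb P hWtight (tendstoInProb_of_det P (hc1 i)))
      (TendstoInProb.add P (hR1 i) (hR2 i))
    apply TendstoInProb.congr P hcomb
    intro n ω
    have hkey2 := key2 (D n) (lagSet (D n) (k i)) (k i) (hsubs n i) (hsub2 n i)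
      (hL0 i n) (hN0 i n) (fun x => Z x ω) μZ
    simp only [hsdef, hTdef, hWdef]
    rw [hkey2]
    ring
  -- the difference of the two statistics
  have hDlt : ∀ i : Fin m, TendstoInProb P (fun n ω => W n ω * (s n ω - T n i ω)) :=
    fun i => TightSeq.mul_tendstoInProb P hWtight (hsT i)
  -- key pointwise identity
  have hkey : ∀ n (i : Fin m) ω, Y n ω i = X n ω i + W n ω * (s n ω - T n i ω) := by
    intro n i ω
    have h := key1 (lagSet (D n) (k i)) (fun x => Z x ω) (fun x => Z (x + k i) ω)
      ((((D n).card : ℝ))⁻¹ * ∑ y ∈ D n, Z y ω) μZ (covRV P (Z 0) (Z (k i)))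
      (Real.sqrt ((D n).card)) (hL0 i n)
    simp only [hYdef, hXdef, hWdef, hsdef, hTdef]
    exact h
  -- closeness in probability of X and Y
  have hprob : ∀ ε > 0, Tendsto (fun n => (P {ω | ε ≤ dist (X n ω) (Y n ω)}).toReal)
      atTop (𝓝 0) := by
    intro ε hε
    have hbound : ∀ n, (P {ω | ε ≤ dist (X n ω) (Y n ω)}).toReal
        ≤ ∑ i : Fin m, (P {ω | ε ≤ |W n ω * (s n ω - T n i ω)|}).toReal := by
      intro n
      have hsubset : {ω | ε ≤ dist (X n ω) (Y n ω)}
          ⊆ ⋃ i : Fin m, {ω | ε ≤ |W n ω * (s n ω - T n i ω)|} := by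
        intro ω hω
        simp only [Set.mem_setOf_eq] at hω
        by_contra hcon
        simp only [Set.mem_iUnion, Set.mem_setOf_eq, not_exists, not_le] at hcon
        have : dist (X n ω) (Y n ω) < ε := by
          rw [dist_pi_lt_iff hε]
          intro i
          rw [Real.dist_eq, hkey n i ω]
          have := hcon i
          rw [show X n ω i - (X n ω i + W n ω * (s n ω - T n i ω))
            = -(W n ω * (s n ω - T n i ω)) by ring, abs_neg]
          exact this
        linarith
      calc (P {ω | ε ≤ dist (X n ω) (Y n ω)}).toReal
          ≤ (∑ i : Fin m, P {ω | ε ≤ |W n ω * (s n ω - T n i ω)|}).toReal :=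
            ENNReal.toReal_mono (by
              refine ENNReal.sum_ne_top.mpr (fun i _ => measure_ne_top P _))
              (le_trans (measure_mono hsubset) (measure_iUnion_fintype_le _ _))
        _ = ∑ i : Fin m, (P {ω | ε ≤ |W n ω * (s n ω - T n i ω)|}).toReal :=
            ENNReal.toReal_sum (fun i _ => measure_ne_top P _)
    refine squeeze_zero (fun n => ENNReal.toReal_nonneg) hbound ?_
    have := tendsto_finset_sum (Finset.univ : Finset (Fin m))
      (fun i _ => hDlt i ε hε)
    simpa using this
  -- conclude via Slutsky
  have := slutsky P hXmeas hYmeas μlim hG hprob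
  intro f
  exact this f

end
end

section
/- Let f : ℤ^d → ℝ satisfy Σ_{v∈ℤ^d} |f(v)| < ∞. Let Aₙ, Bₙ ⊂ ℤ^d be finite nonempty sets and Nₙ positive reals such that Nₙ/|Aₙ| → 1, Nₙ/|Bₙ| → 1, and for every fixed v ∈ ℤ^d, |Aₙ ∩ (Bₙ − v)| / Nₙ → 1 as n → ∞. Then Nₙ · (1/(|Aₙ| |Bₙ|)) Σ_{x∈Aₙ} Σ_{y∈Bₙ} f(y − x) → Σ_{v∈ℤ^d} f(v) as n → ∞. -/
open Filter Finset Topology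

noncomputable section

/-- limiting device. If `f` is absolutely summable on `ℤ^d` and the
finite sets `Aₙ, Bₙ` and normalizers `Nₙ` satisfy `Nₙ/|Aₙ| → 1`, `Nₙ/|Bₙ| → 1` and
`|Aₙ ∩ (Bₙ − v)|/Nₙ → 1` for every `v`, then
`Nₙ · (1/(|Aₙ||Bₙ|)) ∑_{x∈Aₙ} ∑_{y∈Bₙ} f(y−x) → ∑_{v∈ℤ^d} f(v)`. -/
theorem normalized_double_sum_limit
    {d : ℕ} (f : (Fin d → ℤ) → ℝ) (hf : Summable (fun v => |f v|))
    (A B : ℕ → Finset (Fin d → ℤ)) (N : ℕ → ℝ)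
    (hA : ∀ n, (A n).Nonempty) (hB : ∀ n, (B n).Nonempty) (hN : ∀ n, 0 < N n)
    (hNA : Tendsto (fun n => N n / ((A n).card : ℝ)) atTop (𝓝 1))
    (hNB : Tendsto (fun n => N n / ((B n).card : ℝ)) atTop (𝓝 1))
    (hcap : ∀ v : Fin d → ℤ,
      Tendsto (fun n => (((A n) ∩ ((B n).image (· - v))).card : ℝ) / N n) atTop (𝓝 1)) :
    Tendsto (fun n => N n * ((((A n).card : ℝ) * ((B n).card : ℝ))⁻¹ *
        ∑ x ∈ A n, ∑ y ∈ B n, f (y - x))) atTop (𝓝 (∑' v : Fin d → ℤ, f v)) := by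
  classical
  set c : ℕ → (Fin d → ℤ) → ℕ := fun n v => ((A n) ∩ ((B n).image (· - v))).card with hc
  -- Key combinatorial identity
  have key : ∀ n, ∑ x ∈ A n, ∑ y ∈ B n, f (y - x) = ∑' v, (c n v : ℝ) * f v := by
    intro n
    have hprod : ∑ x ∈ A n, ∑ y ∈ B n, f (y - x)
        = ∑ p ∈ A n ×ˢ B n, f (p.2 - p.1) := by
      rw [Finset.sum_product]
    set V := (A n ×ˢ B n).image (fun p : (Fin d → ℤ) × (Fin d → ℤ) => p.2 - p.1) with hV
    have hsupp : ∀ v ∉ V, (c n v : ℝ) * f v = 0 := by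
      intro v hv
      have hz : c n v = 0 := by
        by_contra h
        obtain ⟨x, hx⟩ := Finset.card_pos.mp (Nat.pos_of_ne_zero h)
        simp only [Finset.mem_inter, Finset.mem_image] at hx
        obtain ⟨hxA, y, hyB, hyx⟩ := hx
        exact hv (Finset.mem_image.mpr ⟨(x, y), Finset.mem_product.mpr ⟨hxA, hyB⟩, by
          simp [← hyx]⟩)
      simp [hz]
    rw [tsum_eq_sum hsupp, hprod,
      ← Finset.sum_fiberwise_of_maps_to (g := fun p : (Fin d → ℤ) × (Fin d → ℤ) => p.2 - p.1)
        (t := V) (fun p hp => Finset.mem_image_of_mem _ hp) (fun p => f (p.2 - p.1))]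
    refine Finset.sum_congr rfl fun v hv => ?_
    have hcard : ((A n ×ˢ B n).filter (fun p => p.2 - p.1 = v)).card = c n v := by
      refine Finset.card_bij' (fun p _ => p.1) (fun x _ => (x, x + v)) ?_ ?_ ?_ ?_
      · intro p hp
        simp only [Finset.mem_filter, Finset.mem_product] at hp
        obtain ⟨⟨h1, h2⟩, h3⟩ := hp
        refine Finset.mem_inter.mpr ⟨h1, Finset.mem_image.mpr ⟨p.2, h2, ?_⟩⟩
        show p.2 - v = p.1
        rw [← h3, sub_sub_cancel]
      · intro x hx
        simp only [Finset.mem_inter, Finset.mem_image] at hx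
        obtain ⟨hxA, y, hyB, hyx⟩ := hx
        have hy : y = x + v := by rw [← hyx]; simp
        refine Finset.mem_filter.mpr ⟨Finset.mem_product.mpr ⟨hxA, ?_⟩, ?_⟩
        · show x + v ∈ B n
          rwa [← hy]
        · show x + v - x = v
          rw [add_sub_cancel_left]
      · intro p hp
        simp only [Finset.mem_filter] at hp
        have h2 : p.2 = p.1 + v := by rw [← hp.2]; simp
        exact Prod.ext rfl h2.symm
      · intro x hx; rfl
    calc ∑ p ∈ (A n ×ˢ B n).filter (fun p => p.2 - p.1 = v), f (p.2 - p.1)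
        = ∑ _p ∈ (A n ×ˢ B n).filter (fun p => p.2 - p.1 = v), f v :=
          Finset.sum_congr rfl fun p hp => by rw [(Finset.mem_filter.mp hp).2]
      _ = (c n v : ℝ) * f v := by rw [Finset.sum_const, hcard, nsmul_eq_mul]
  -- Dominated convergence for the normalized sums
  have hSconv : Tendsto (fun n => ∑' v, ((c n v : ℝ) / N n) * f v) atTop (𝓝 (∑' v, f v)) := by
    have hAN : Tendsto (fun n => ((A n).card : ℝ) / N n) atTop (𝓝 1) := by
      have h := hNA.inv₀ one_ne_zero
      simp only [inv_div, inv_one] at h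
      exact h
    refine tendsto_tsum_of_dominated_convergence (bound := fun v => 2 * |f v|)
      (hf.mul_left 2) (fun v => ?_) ?_
    · have h := (hcap v).mul_const (f v)
      rw [one_mul] at h
      exact h
    · filter_upwards [hAN.eventually_lt_const (by norm_num : (1:ℝ) < 2)] with n hn v
      have h0 : (0:ℝ) ≤ (c n v : ℝ) / N n := div_nonneg (by positivity) (hN n).le
      have hle : (c n v : ℝ) ≤ ((A n).card : ℝ) := by
        exact_mod_cast Finset.card_le_card (Finset.inter_subset_left)
      have h2 : (c n v : ℝ) / N n ≤ 2 := by
        calc (c n v : ℝ) / N n ≤ ((A n).card : ℝ) / N n := by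
              gcongr
              exact (hN n).le
          _ ≤ 2 := hn.le
      rw [Real.norm_eq_abs, abs_mul, abs_of_nonneg h0]
      exact mul_le_mul_of_nonneg_right h2 (abs_nonneg _)
  -- Algebraic rearrangement
  have heq : ∀ n, N n * ((((A n).card : ℝ) * ((B n).card : ℝ))⁻¹ *
        ∑ x ∈ A n, ∑ y ∈ B n, f (y - x))
      = (N n / ((A n).card : ℝ)) * (N n / ((B n).card : ℝ))
        * ∑' v, ((c n v : ℝ) / N n) * f v := by
    intro n
    have hts : ∑' v, ((c n v : ℝ) / N n) * f v
        = (N n)⁻¹ * ∑ x ∈ A n, ∑ y ∈ B n, f (y - x) := by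
      rw [key n, show (fun v => ((c n v : ℝ) / N n) * f v)
          = fun v => (N n)⁻¹ * ((c n v : ℝ) * f v) from funext fun v => by ring,
        tsum_mul_left]
    rw [hts]
    have hN0 : N n ≠ 0 := (hN n).ne'
    field_simp
  have hfin : Tendsto (fun n => (N n / ((A n).card : ℝ)) * (N n / ((B n).card : ℝ))
      * ∑' v, ((c n v : ℝ) / N n) * f v) atTop (𝓝 (1 * 1 * ∑' v, f v)) :=
    (hNA.mul hNB).mul hSconv
  rw [one_mul, one_mul] at hfin
  exact hfin.congr (fun n => (heq n).symm)

end
end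

section
/- Let Z : ℤ^d → Ω → ℝ be a measurable random field whose strong mixing coefficients satisfy sup_b α_b(r)/b ≤ K r^{−ε} for all r ≥ 1, for some constants K < ∞ and ε > 0. Let E₁,…,E_k ⊂ ℤ^d be finite sets with |Eᵢ| ≤ b for each i and pairwise distances d(Eᵢ,Eⱼ) ≥ r ≥ 1 for i ≠ j, and let U₁,…,U_k be complex-valued random variables with Uᵢ measurable with respect to 𝔉(Eᵢ) and |Uᵢ| ≤ 1 almost surely. Then |E[∏_{i=1}^k Uᵢ] − ∏_{i=1}^k E[Uᵢ]| ≤ 16 K b r^{−ε} · k(k−1)/2. -/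
open MeasureTheory ProbabilityTheory Filter Finset Topology

noncomputable section

/-- The σ-algebra `𝔉(E)` generated by `{Z(x) : x ∈ E}`. -/
def fieldSigma {Ω : Type*} [MeasurableSpace Ω] {d : ℕ} (Z : (Fin d → ℤ) → Ω → ℝ)
    (E : Set (Fin d → ℤ)) : MeasurableSpace Ω :=
  ⨆ x ∈ E, MeasurableSpace.comap (Z x) inferInstance

/-- The strong mixing coefficient `α_b(r)` of the random field `Z`. -/
def mixCoef {Ω : Type*} [MeasurableSpace Ω] (P : Measure Ω) {d : ℕ}
    (Z : (Fin d → ℤ) → Ω → ℝ) (b r : ℕ) : ℝ :=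
  sSup {x : ℝ | ∃ (E₁ E₂ : Finset (Fin d → ℤ)) (A₁ A₂ : Set Ω),
    E₁.card ≤ b ∧ E₂.card ≤ b ∧
    (∀ x₁ ∈ E₁, ∀ x₂ ∈ E₂, r ≤ Finset.univ.sup (fun j => (x₁ j - x₂ j).natAbs)) ∧
    MeasurableSet[fieldSigma Z ↑E₁] A₁ ∧ MeasurableSet[fieldSigma Z ↑E₂] A₂ ∧
    x = |(P (A₁ ∩ A₂)).toReal - (P A₁).toReal * (P A₂).toReal|}


private lemma covA {Ω : Type*} {m : MeasurableSpace Ω} {m0 : MeasurableSpace Ω}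
    (hm : m ≤ m0) (P : Measure Ω) [IsProbabilityMeasure P] {X Y : Ω → ℝ}
    (hX : Measurable[m] X) (hXb : ∀ᵐ ω ∂P, |X ω| ≤ 1) (hY : Integrable Y P) :
    ∃ A : Set Ω, MeasurableSet[m] A ∧
      |(∫ ω, X ω * Y ω ∂P) - (∫ ω, X ω ∂P) * ∫ ω, Y ω ∂P| ≤
        2 * ((∫ ω in A, Y ω ∂P) - (P A).toReal * ∫ ω, Y ω ∂P) := by
  have hXm0 : Measurable[m0] X := hX.mono hm le_rfl
  have hXb' : ∀ᵐ ω ∂P, ‖X ω‖ ≤ 1 := hXb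
  have hXint : Integrable X P :=
    (integrable_const (1:ℝ)).mono' hXm0.aestronglyMeasurable hXb'
  set c := ∫ ω, Y ω ∂P with hc
  set Y' := fun ω => Y ω - c with hY'def
  have hY' : Integrable Y' P := hY.sub (integrable_const c)
  have hY'0 : ∫ ω, Y' ω ∂P = 0 := by
    show ∫ ω, (Y ω - c) ∂P = 0
    rw [integral_sub hY (integrable_const c)]
    simp [hc]
  have hXY' : Integrable (fun ω => X ω * Y' ω) P :=
    hY'.bdd_mul hXm0.aestronglyMeasurable hXb'
  set g := P[Y'|m] with hg
  have hgint : Integrable g P := integrable_condExp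
  have hgm : Measurable[m] g := stronglyMeasurable_condExp.measurable
  have hgm0 : Measurable[m0] g := hgm.mono hm le_rfl
  have hXg : Integrable (fun ω => X ω * g ω) P :=
    hgint.bdd_mul hXm0.aestronglyMeasurable hXb'
  have key : ∫ ω, X ω * Y' ω ∂P = ∫ ω, X ω * g ω ∂P := by
    have h1 : P[fun ω => X ω * Y' ω|m] =ᵐ[P] fun ω => X ω * g ω :=
      condExp_mul_of_stronglyMeasurable_left hX.stronglyMeasurable hXY' hY'
    calc ∫ ω, X ω * Y' ω ∂P = ∫ ω, (P[fun ω => X ω * Y' ω|m]) ω ∂P :=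
          (integral_condExp hm).symm
      _ = ∫ ω, X ω * g ω ∂P := integral_congr_ae h1
  set A := {ω | 0 ≤ g ω} with hA
  have hAm : MeasurableSet[m] A := measurableSet_le measurable_const hgm
  have hAm0 : MeasurableSet[m0] A := hm _ hAm
  refine ⟨A, hAm, ?_⟩
  have habs : ∀ ω, |g ω| = 2 * A.indicator g ω - g ω := by
    intro ω
    by_cases h : ω ∈ A
    · simp only [Set.indicator_of_mem h]
      have : 0 ≤ g ω := h
      rw [abs_of_nonneg this]; ring
    · simp only [Set.indicator_of_notMem h]
      have : g ω < 0 := not_le.mp h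
      rw [abs_of_nonpos this.le]; ring
  have hgind : Integrable (A.indicator g) P := hgint.indicator hAm0
  have habsint : ∫ ω, |g ω| ∂P = 2 * ∫ ω in A, g ω ∂P := by
    have : ∫ ω, |g ω| ∂P = ∫ ω, (2 * A.indicator g ω - g ω) ∂P :=
      integral_congr_ae (Filter.Eventually.of_forall habs)
    rw [this, integral_sub ((hgind.const_mul 2)) hgint, integral_const_mul,
      integral_indicator hAm0]
    have hg0 : ∫ ω, g ω ∂P = 0 := by rw [hg, integral_condExp hm, hY'0]
    rw [hg0]; ring
  have hsetA : ∫ ω in A, g ω ∂P = (∫ ω in A, Y ω ∂P) - (P A).toReal * c := by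
    rw [hg, setIntegral_condExp hm hY' hAm]
    rw [hY'def]
    rw [integral_sub (hY.integrableOn) (integrableOn_const (measure_lt_top P A).ne)]
    simp [mul_comm, Measure.real]
  have hLHS : (∫ ω, X ω * Y ω ∂P) - (∫ ω, X ω ∂P) * c = ∫ ω, X ω * Y' ω ∂P := by
    have : ∀ ω, X ω * Y' ω = X ω * Y ω - X ω * c := by intro ω; rw [hY'def]; ring
    rw [integral_congr_ae (Filter.Eventually.of_forall this),
      integral_sub (hY.bdd_mul hXm0.aestronglyMeasurable hXb') (hXint.mul_const c),
      integral_mul_const]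
  rw [hLHS]
  calc |∫ ω, X ω * Y' ω ∂P| = |∫ ω, X ω * g ω ∂P| := by rw [key]
    _ ≤ ∫ ω, |X ω| * |g ω| ∂P := by
        simpa [abs_mul] using norm_integral_le_integral_norm (fun ω => X ω * g ω) (μ := P)
    _ ≤ ∫ ω, |g ω| ∂P := by
        refine integral_mono_ae (by simpa [abs_mul] using hXg.abs) hgint.abs ?_
        filter_upwards [hXb] with ω h
        exact mul_le_of_le_one_left (abs_nonneg _) h
    _ = 2 * ∫ ω in A, g ω ∂P := habsint
    _ = 2 * ((∫ ω in A, Y ω ∂P) - (P A).toReal * c) := by rw [hsetA]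

private lemma covB {Ω : Type*} {m₁ m₂ : MeasurableSpace Ω} {m0 : MeasurableSpace Ω}
    (hm₁ : m₁ ≤ m0) (hm₂ : m₂ ≤ m0) (P : Measure Ω) [IsProbabilityMeasure P] {X Y : Ω → ℝ}
    (hX : Measurable[m₁] X) (hXb : ∀ᵐ ω ∂P, |X ω| ≤ 1)
    (hY : Measurable[m₂] Y) (hYb : ∀ᵐ ω ∂P, |Y ω| ≤ 1) :
    ∃ A B : Set Ω, MeasurableSet[m₁] A ∧ MeasurableSet[m₂] B ∧
      |(∫ ω, X ω * Y ω ∂P) - (∫ ω, X ω ∂P) * ∫ ω, Y ω ∂P| ≤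
        4 * |(P (A ∩ B)).toReal - (P A).toReal * (P B).toReal| := by
  have hYm0 : Measurable[m0] Y := hY.mono hm₂ le_rfl
  have hYb' : ∀ᵐ ω ∂P, ‖Y ω‖ ≤ 1 := hYb
  have hYint : Integrable Y P :=
    (integrable_const (1:ℝ)).mono' hYm0.aestronglyMeasurable hYb'
  obtain ⟨A, hAm, h1⟩ := covA hm₁ P hX hXb hYint
  have hAm0 : MeasurableSet[m0] A := hm₁ _ hAm
  have hind : Integrable (A.indicator fun _ => (1:ℝ)) P :=
    (integrable_const (1:ℝ)).indicator hAm0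
  obtain ⟨B, hBm, h2⟩ := covA hm₂ P hY hYb hind
  have hBm0 : MeasurableSet[m0] B := hm₂ _ hBm
  refine ⟨A, B, hAm, hBm, ?_⟩
  -- identify integrals of the indicator
  have e1 : ∫ ω, A.indicator (fun _ => (1:ℝ)) ω ∂P = (P A).toReal := by
    simp [integral_indicator hAm0, Measure.real]
  have e2 : ∫ ω in B, A.indicator (fun _ => (1:ℝ)) ω ∂P = (P (A ∩ B)).toReal := by
    rw [integral_indicator hAm0]
    simp [Measure.restrict_restrict hAm0, Measure.restrict_apply_univ, Measure.real]
  have e3 : ∫ ω, Y ω * A.indicator (fun _ => (1:ℝ)) ω ∂P = ∫ ω in A, Y ω ∂P := by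
    have : ∀ ω, Y ω * A.indicator (fun _ => (1:ℝ)) ω = A.indicator Y ω := by
      intro ω; by_cases h : ω ∈ A <;>
        simp [Set.indicator_of_mem, Set.indicator_of_notMem, h]
    rw [integral_congr_ae (Filter.Eventually.of_forall this), integral_indicator hAm0]
  rw [e1, e2, e3] at h2
  -- combine
  have h3 : |(∫ ω in A, Y ω ∂P) - (P A).toReal * ∫ ω, Y ω ∂P| ≤
      2 * |(P (A ∩ B)).toReal - (P A).toReal * (P B).toReal| := by
    calc |(∫ ω in A, Y ω ∂P) - (P A).toReal * ∫ ω, Y ω ∂P|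
        = |(∫ ω in A, Y ω ∂P) - (∫ ω, Y ω ∂P) * (P A).toReal| := by rw [mul_comm]
      _ ≤ 2 * ((P (A ∩ B)).toReal - (P B).toReal * (P A).toReal) := h2
      _ ≤ 2 * |(P (A ∩ B)).toReal - (P A).toReal * (P B).toReal| := by
          rw [mul_comm (P B).toReal]
          exact mul_le_mul_of_nonneg_left (le_abs_self _) (by norm_num)
  calc |(∫ ω, X ω * Y ω ∂P) - (∫ ω, X ω ∂P) * ∫ ω, Y ω ∂P|
      ≤ 2 * ((∫ ω in A, Y ω ∂P) - (P A).toReal * ∫ ω, Y ω ∂P) := h1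
    _ ≤ 2 * |(∫ ω in A, Y ω ∂P) - (P A).toReal * ∫ ω, Y ω ∂P| :=
        mul_le_mul_of_nonneg_left (le_abs_self _) (by norm_num)
    _ ≤ 2 * (2 * |(P (A ∩ B)).toReal - (P A).toReal * (P B).toReal|) :=
        mul_le_mul_of_nonneg_left h3 (by norm_num)
    _ = 4 * |(P (A ∩ B)).toReal - (P A).toReal * (P B).toReal| := by ring

private lemma covC {Ω : Type*} {m₁ m₂ : MeasurableSpace Ω} {m0 : MeasurableSpace Ω}
    (hm₁ : m₁ ≤ m0) (hm₂ : m₂ ≤ m0) (P : Measure Ω) [IsProbabilityMeasure P] {X Y : Ω → ℂ}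
    (hX : Measurable[m₁] X) (hXb : ∀ᵐ ω ∂P, ‖X ω‖ ≤ 1)
    (hY : Measurable[m₂] Y) (hYb : ∀ᵐ ω ∂P, ‖Y ω‖ ≤ 1)
    {α : ℝ} (hα : ∀ A B : Set Ω, MeasurableSet[m₁] A → MeasurableSet[m₂] B →
      |(P (A ∩ B)).toReal - (P A).toReal * (P B).toReal| ≤ α) :
    ‖(∫ ω, X ω * Y ω ∂P) - (∫ ω, X ω ∂P) * ∫ ω, Y ω ∂P‖ ≤ 16 * α := by
  have key : ∀ (f g : Ω → ℝ), Measurable[m₁] f → (∀ᵐ ω ∂P, |f ω| ≤ 1) →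
      Measurable[m₂] g → (∀ᵐ ω ∂P, |g ω| ≤ 1) →
      |(∫ ω, f ω * g ω ∂P) - (∫ ω, f ω ∂P) * ∫ ω, g ω ∂P| ≤ 4 * α := by
    intro f g hf hfb hg hgb
    obtain ⟨A, B, hA, hB, h⟩ := covB hm₁ hm₂ P hf hfb hg hgb
    exact h.trans (mul_le_mul_of_nonneg_left (hα A B hA hB) (by norm_num))
  -- real and imaginary parts
  set Xr := fun ω => (X ω).re with hXr
  set Xi := fun ω => (X ω).im with hXi
  set Yr := fun ω => (Y ω).re with hYr
  set Yi := fun ω => (Y ω).im with hYi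
  have hXrm : Measurable[m₁] Xr := Complex.measurable_re.comp hX
  have hXim : Measurable[m₁] Xi := Complex.measurable_im.comp hX
  have hYrm : Measurable[m₂] Yr := Complex.measurable_re.comp hY
  have hYim : Measurable[m₂] Yi := Complex.measurable_im.comp hY
  have hXrb : ∀ᵐ ω ∂P, |Xr ω| ≤ 1 := by
    filter_upwards [hXb] with ω h; exact (Complex.abs_re_le_norm _).trans h
  have hXib : ∀ᵐ ω ∂P, |Xi ω| ≤ 1 := by
    filter_upwards [hXb] with ω h; exact (Complex.abs_im_le_norm _).trans h
  have hYrb : ∀ᵐ ω ∂P, |Yr ω| ≤ 1 := by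
    filter_upwards [hYb] with ω h; exact (Complex.abs_re_le_norm _).trans h
  have hYib : ∀ᵐ ω ∂P, |Yi ω| ≤ 1 := by
    filter_upwards [hYb] with ω h; exact (Complex.abs_im_le_norm _).trans h
  -- integrability
  have hXm0 : Measurable[m0] X := hX.mono hm₁ le_rfl
  have hYm0 : Measurable[m0] Y := hY.mono hm₂ le_rfl
  have hXint : Integrable X P :=
    (integrable_const (1:ℝ)).mono' hXm0.aestronglyMeasurable hXb
  have hYint : Integrable Y P :=
    (integrable_const (1:ℝ)).mono' hYm0.aestronglyMeasurable hYb
  have hXYint : Integrable (fun ω => X ω * Y ω) P :=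
    hYint.bdd_mul hXm0.aestronglyMeasurable hXb
  have int_of : ∀ (f : Ω → ℝ), Measurable[m0] f → (∀ᵐ ω ∂P, |f ω| ≤ 1) → Integrable f P := by
    intro f hf hfb
    exact (integrable_const (1:ℝ)).mono' hf.aestronglyMeasurable hfb
  have hXrint := int_of Xr (hXrm.mono hm₁ le_rfl) hXrb
  have hXiint := int_of Xi (hXim.mono hm₁ le_rfl) hXib
  have hYrint := int_of Yr (hYrm.mono hm₂ le_rfl) hYrb
  have hYiint := int_of Yi (hYim.mono hm₂ le_rfl) hYib
  have hXrYr : Integrable (fun ω => Xr ω * Yr ω) P :=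
    hYrint.bdd_mul ((hXrm.mono hm₁ le_rfl)).aestronglyMeasurable hXrb
  have hXiYi : Integrable (fun ω => Xi ω * Yi ω) P :=
    hYiint.bdd_mul ((hXim.mono hm₁ le_rfl)).aestronglyMeasurable hXib
  have hXrYi : Integrable (fun ω => Xr ω * Yi ω) P :=
    hYiint.bdd_mul ((hXrm.mono hm₁ le_rfl)).aestronglyMeasurable hXrb
  have hXiYr : Integrable (fun ω => Xi ω * Yr ω) P :=
    hYrint.bdd_mul ((hXim.mono hm₁ le_rfl)).aestronglyMeasurable hXib
  set D := (∫ ω, X ω * Y ω ∂P) - (∫ ω, X ω ∂P) * ∫ ω, Y ω ∂P with hD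
  have hIXre : (∫ ω, X ω ∂P).re = ∫ ω, Xr ω ∂P := by
    simpa using (integral_re hXint).symm
  have hIXim : (∫ ω, X ω ∂P).im = ∫ ω, Xi ω ∂P := by
    simpa using (integral_im hXint).symm
  have hIYre : (∫ ω, Y ω ∂P).re = ∫ ω, Yr ω ∂P := by
    simpa using (integral_re hYint).symm
  have hIYim : (∫ ω, Y ω ∂P).im = ∫ ω, Yi ω ∂P := by
    simpa using (integral_im hYint).symm
  have hIXYre : (∫ ω, X ω * Y ω ∂P).re = (∫ ω, Xr ω * Yr ω ∂P) - ∫ ω, Xi ω * Yi ω ∂P := by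
    have h1 : (∫ ω, X ω * Y ω ∂P).re = ∫ ω, (X ω * Y ω).re ∂P := by
      simpa using (integral_re hXYint).symm
    rw [h1]
    have : ∀ ω, (X ω * Y ω).re = Xr ω * Yr ω - Xi ω * Yi ω := fun ω => Complex.mul_re _ _
    rw [integral_congr_ae (Filter.Eventually.of_forall this), integral_sub hXrYr hXiYi]
  have hIXYim : (∫ ω, X ω * Y ω ∂P).im = (∫ ω, Xr ω * Yi ω ∂P) + ∫ ω, Xi ω * Yr ω ∂P := by
    have h1 : (∫ ω, X ω * Y ω ∂P).im = ∫ ω, (X ω * Y ω).im ∂P := by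
      simpa using (integral_im hXYint).symm
    rw [h1]
    have : ∀ ω, (X ω * Y ω).im = Xr ω * Yi ω + Xi ω * Yr ω := by
      intro ω; rw [Complex.mul_im]
    rw [integral_congr_ae (Filter.Eventually.of_forall this), integral_add hXrYi hXiYr]
  have hDre : D.re = ((∫ ω, Xr ω * Yr ω ∂P) - (∫ ω, Xr ω ∂P) * ∫ ω, Yr ω ∂P)
      - ((∫ ω, Xi ω * Yi ω ∂P) - (∫ ω, Xi ω ∂P) * ∫ ω, Yi ω ∂P) := by
    rw [hD, Complex.sub_re, Complex.mul_re, hIXYre, hIXre, hIXim, hIYre, hIYim]; ring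
  have hDim : D.im = ((∫ ω, Xr ω * Yi ω ∂P) - (∫ ω, Xr ω ∂P) * ∫ ω, Yi ω ∂P)
      + ((∫ ω, Xi ω * Yr ω ∂P) - (∫ ω, Xi ω ∂P) * ∫ ω, Yr ω ∂P) := by
    rw [hD, Complex.sub_im, Complex.mul_im, hIXYim, hIXre, hIXim, hIYre, hIYim]; ring
  have h1 := key Xr Yr hXrm hXrb hYrm hYrb
  have h2 := key Xi Yi hXim hXib hYim hYib
  have h3 := key Xr Yi hXrm hXrb hYim hYib
  have h4 := key Xi Yr hXim hXib hYrm hYrb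
  calc ‖D‖ ≤ |D.re| + |D.im| := Complex.norm_le_abs_re_add_abs_im _
    _ ≤ (|(∫ ω, Xr ω * Yr ω ∂P) - (∫ ω, Xr ω ∂P) * ∫ ω, Yr ω ∂P|
          + |(∫ ω, Xi ω * Yi ω ∂P) - (∫ ω, Xi ω ∂P) * ∫ ω, Yi ω ∂P|)
        + (|(∫ ω, Xr ω * Yi ω ∂P) - (∫ ω, Xr ω ∂P) * ∫ ω, Yi ω ∂P|
          + |(∫ ω, Xi ω * Yr ω ∂P) - (∫ ω, Xi ω ∂P) * ∫ ω, Yr ω ∂P|) := by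
        rw [hDre, hDim]
        exact add_le_add (abs_sub _ _) (abs_add_le _ _)
    _ ≤ (4 * α + 4 * α) + (4 * α + 4 * α) :=
        add_le_add (add_le_add h1 h2) (add_le_add h3 h4)
    _ = 16 * α := by ring

open MeasureTheory ProbabilityTheory Filter Finset Topology

private lemma fieldSigma_le {Ω : Type*} [m0 : MeasurableSpace Ω] {d : ℕ}
    (Z : (Fin d → ℤ) → Ω → ℝ) (hZ : ∀ x, Measurable (Z x)) (E : Set (Fin d → ℤ)) :
    fieldSigma Z E ≤ m0 :=
  iSup₂_le fun x _ => (hZ x).comap_le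

private lemma fieldSigma_mono {Ω : Type*} [MeasurableSpace Ω] {d : ℕ}
    (Z : (Fin d → ℤ) → Ω → ℝ) {E F : Set (Fin d → ℤ)} (h : E ⊆ F) :
    fieldSigma Z E ≤ fieldSigma Z F :=
  biSup_mono h

private lemma mixCoef_bddAbove {Ω : Type*} [MeasurableSpace Ω] (P : Measure Ω)
    [IsProbabilityMeasure P] {d : ℕ} (Z : (Fin d → ℤ) → Ω → ℝ) (b r : ℕ) :
    BddAbove {x : ℝ | ∃ (E₁ E₂ : Finset (Fin d → ℤ)) (A₁ A₂ : Set Ω),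
      E₁.card ≤ b ∧ E₂.card ≤ b ∧
      (∀ x₁ ∈ E₁, ∀ x₂ ∈ E₂, r ≤ Finset.univ.sup (fun j => (x₁ j - x₂ j).natAbs)) ∧
      MeasurableSet[fieldSigma Z ↑E₁] A₁ ∧ MeasurableSet[fieldSigma Z ↑E₂] A₂ ∧
      x = |(P (A₁ ∩ A₂)).toReal - (P A₁).toReal * (P A₂).toReal|} := by
  refine ⟨1, fun x hx => ?_⟩
  obtain ⟨E₁, E₂, A₁, A₂, -, -, -, -, -, hx⟩ := hx
  have hp : ∀ A : Set Ω, (P A).toReal ≤ 1 := fun A => by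
    simpa using ENNReal.toReal_mono ENNReal.one_ne_top (prob_le_one (μ := P) (s := A))
  have hp0 : ∀ A : Set Ω, 0 ≤ (P A).toReal := fun A => ENNReal.toReal_nonneg
  rw [hx, abs_le]
  constructor <;> nlinarith [hp (A₁ ∩ A₂), hp A₁, hp A₂, hp0 (A₁ ∩ A₂), hp0 A₁, hp0 A₂]

private lemma le_mixCoef {Ω : Type*} [MeasurableSpace Ω] (P : Measure Ω)
    [IsProbabilityMeasure P] {d : ℕ} (Z : (Fin d → ℤ) → Ω → ℝ) (b r : ℕ)
    (E₁ E₂ : Finset (Fin d → ℤ)) (A₁ A₂ : Set Ω)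
    (h₁ : E₁.card ≤ b) (h₂ : E₂.card ≤ b)
    (hdist : ∀ x₁ ∈ E₁, ∀ x₂ ∈ E₂, r ≤ Finset.univ.sup (fun j => (x₁ j - x₂ j).natAbs))
    (hA₁ : MeasurableSet[fieldSigma Z ↑E₁] A₁) (hA₂ : MeasurableSet[fieldSigma Z ↑E₂] A₂) :
    |(P (A₁ ∩ A₂)).toReal - (P A₁).toReal * (P A₂).toReal| ≤ mixCoef P Z b r :=
  le_csSup (mixCoef_bddAbove P Z b r) ⟨E₁, E₂, A₁, A₂, h₁, h₂, hdist, hA₁, hA₂, rfl⟩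

private lemma mixCoef_nonneg {Ω : Type*} [MeasurableSpace Ω] (P : Measure Ω)
    [IsProbabilityMeasure P] {d : ℕ} (Z : (Fin d → ℤ) → Ω → ℝ) (b r : ℕ) :
    0 ≤ mixCoef P Z b r := by
  have := le_mixCoef P Z b r ∅ ∅ ∅ ∅ (by simp) (by simp) (by simp)
    (@MeasurableSet.empty _ (fieldSigma Z ↑(∅ : Finset (Fin d → ℤ))))
    (@MeasurableSet.empty _ (fieldSigma Z ↑(∅ : Finset (Fin d → ℤ))))
  simpa using this

/-- If the mixing coefficients of `Z` satisfy
`sup_b α_b(r)/b ≤ K r^{−ε}` for all `r ≥ 1`, and `U₁,…,U_k` are complex random variables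
with `|Uᵢ| ≤ 1` a.s., `Uᵢ` measurable w.r.t. `𝔉(Eᵢ)` where `|Eᵢ| ≤ b` and the `Eᵢ` are at
pairwise distance at least `r ≥ 1`, then
`|E[∏ᵢ Uᵢ] − ∏ᵢ E[Uᵢ]| ≤ 16 K b r^{−ε} · k(k−1)/2`. -/
theorem product_expectation_mixing_bound
    {Ω : Type*} [MeasurableSpace Ω] (P : Measure Ω) [IsProbabilityMeasure P]
    {d : ℕ} (Z : (Fin d → ℤ) → Ω → ℝ) (hZ : ∀ x, Measurable (Z x))
    (K ε : ℝ) (hε : 0 < ε)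
    (hmix : ∀ b r : ℕ, 1 ≤ r → mixCoef P Z b r ≤ K * b * (r : ℝ) ^ (-ε))
    (k b r : ℕ) (hr : 1 ≤ r)
    (E : Fin k → Finset (Fin d → ℤ))
    (hEcard : ∀ i, (E i).card ≤ b)
    (hEdist : ∀ i j : Fin k, i ≠ j →
      ∀ x₁ ∈ E i, ∀ x₂ ∈ E j, r ≤ Finset.univ.sup (fun l => (x₁ l - x₂ l).natAbs))
    (U : Fin k → Ω → ℂ)
    (hUmeas : ∀ i, Measurable[fieldSigma Z ↑(E i)] (U i))
    (hUbd : ∀ i, ∀ᵐ ω ∂P, ‖U i ω‖ ≤ 1) :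
    ‖(∫ ω, ∏ i, U i ω ∂P) - ∏ i, ∫ ω, U i ω ∂P‖ ≤
      16 * K * b * (r : ℝ) ^ (-ε) * ((k : ℝ) * ((k : ℝ) - 1) / 2) := by
  classical
  have hfle : ∀ s : Finset (Fin d → ℤ), fieldSigma Z ↑s ≤ ‹MeasurableSpace Ω› :=
    fun s => fieldSigma_le Z hZ _
  have hCnn : 0 ≤ K * (b : ℝ) * (r : ℝ) ^ (-ε) :=
    le_trans (mixCoef_nonneg P Z b r) (hmix b r hr)
  have hUm0 : ∀ i, Measurable (U i) := fun i => (hUmeas i).mono (hfle _) le_rfl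
  have hUint : ∀ i, Integrable (U i) P := fun i =>
    (integrable_const (1 : ℝ)).mono' (hUm0 i).aestronglyMeasurable (hUbd i)
  have hIUbd : ∀ i, ‖∫ ω, U i ω ∂P‖ ≤ 1 := by
    intro i
    calc ‖∫ ω, U i ω ∂P‖ ≤ ∫ ω, ‖U i ω‖ ∂P := norm_integral_le_integral_norm _
      _ ≤ ∫ (_ : Ω), (1 : ℝ) ∂P :=
          integral_mono_ae (hUint i).norm (integrable_const 1) (hUbd i)
      _ = 1 := by simp
  have hball : ∀ᵐ ω ∂P, ∀ i, ‖U i ω‖ ≤ 1 := ae_all_iff.mpr hUbd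
  have main : ∀ s : Finset (Fin k),
      ‖(∫ ω, ∏ i ∈ s, U i ω ∂P) - ∏ i ∈ s, ∫ ω, U i ω ∂P‖ ≤
        16 * K * b * (r : ℝ) ^ (-ε) * ((s.card : ℝ) * ((s.card : ℝ) - 1) / 2) := by
    intro s
    induction s using Finset.induction_on with
    | empty => simp
    | @insert a t ha ih =>
      rcases t.eq_empty_or_nonempty with rfl | htne
      · simp
      have htc : 1 ≤ t.card := Finset.card_pos.mpr htne
      set F := t.biUnion E with hF
      set V := fun ω => ∏ i ∈ t, U i ω with hV
      have hVmeas : Measurable[fieldSigma Z ↑F] V := by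
        refine Finset.measurable_prod t fun i hi => ?_
        exact (hUmeas i).mono
          (fieldSigma_mono Z (Finset.coe_subset.mpr (Finset.subset_biUnion_of_mem E hi))) le_rfl
      have hVbd : ∀ᵐ ω ∂P, ‖V ω‖ ≤ 1 := by
        filter_upwards [hball] with ω h
        calc ‖V ω‖ = ∏ i ∈ t, ‖U i ω‖ := by rw [hV]; exact norm_prod _ _
          _ ≤ 1 := Finset.prod_le_one (fun i _ => norm_nonneg _) (fun i _ => h i)
      have hVm0 : Measurable V := hVmeas.mono (hfle F) le_rfl
      have hVint : Integrable V P :=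
        (integrable_const (1 : ℝ)).mono' hVm0.aestronglyMeasurable hVbd
      have hα : ∀ A B : Set Ω, MeasurableSet[fieldSigma Z ↑(E a)] A →
          MeasurableSet[fieldSigma Z ↑F] B →
          |(P (A ∩ B)).toReal - (P A).toReal * (P B).toReal| ≤ mixCoef P Z (t.card * b) r := by
        intro A B hA hB
        refine le_mixCoef P Z (t.card * b) r (E a) F A B ?_ ?_ ?_ hA hB
        · exact (hEcard a).trans (Nat.le_mul_of_pos_left b (Nat.lt_of_lt_of_le Nat.zero_lt_one htc))
        · exact Finset.card_biUnion_le_card_mul t E b fun i _ => hEcard i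
        · intro x₁ hx₁ x₂ hx₂
          obtain ⟨j, hj, hx₂'⟩ := Finset.mem_biUnion.mp hx₂
          have hne : a ≠ j := fun h => ha (h ▸ hj)
          exact hEdist a j hne x₁ hx₁ x₂ hx₂'
      have hcov : ‖(∫ ω, U a ω * V ω ∂P) - (∫ ω, U a ω ∂P) * ∫ ω, V ω ∂P‖ ≤
          16 * mixCoef P Z (t.card * b) r :=
        covC (hfle (E a)) (hfle F) P (hUmeas a) (hUbd a) hVmeas hVbd hα
      have hcov2 : ‖(∫ ω, U a ω * V ω ∂P) - (∫ ω, U a ω ∂P) * ∫ ω, V ω ∂P‖ ≤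
          16 * (K * b * (r : ℝ) ^ (-ε)) * t.card := by
        refine hcov.trans ?_
        have := hmix (t.card * b) r hr
        calc 16 * mixCoef P Z (t.card * b) r ≤ 16 * (K * ↑(t.card * b) * (r : ℝ) ^ (-ε)) := by
              linarith
          _ = 16 * (K * b * (r : ℝ) ^ (-ε)) * t.card := by push_cast; ring
      have hsplit : (∫ ω, ∏ i ∈ insert a t, U i ω ∂P) - ∏ i ∈ insert a t, ∫ ω, U i ω ∂P =
          ((∫ ω, U a ω * V ω ∂P) - (∫ ω, U a ω ∂P) * ∫ ω, V ω ∂P) +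
            (∫ ω, U a ω ∂P) * ((∫ ω, V ω ∂P) - ∏ i ∈ t, ∫ ω, U i ω ∂P) := by
        have h1 : ∫ ω, ∏ i ∈ insert a t, U i ω ∂P = ∫ ω, U a ω * V ω ∂P :=
          integral_congr_ae (Filter.Eventually.of_forall fun ω => Finset.prod_insert ha)
        rw [h1, Finset.prod_insert ha]
        ring
      rw [hsplit, Finset.card_insert_of_notMem ha]
      calc ‖((∫ ω, U a ω * V ω ∂P) - (∫ ω, U a ω ∂P) * ∫ ω, V ω ∂P) +
            (∫ ω, U a ω ∂P) * ((∫ ω, V ω ∂P) - ∏ i ∈ t, ∫ ω, U i ω ∂P)‖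
          ≤ ‖(∫ ω, U a ω * V ω ∂P) - (∫ ω, U a ω ∂P) * ∫ ω, V ω ∂P‖ +
            ‖∫ ω, U a ω ∂P‖ * ‖(∫ ω, V ω ∂P) - ∏ i ∈ t, ∫ ω, U i ω ∂P‖ := by
            refine (norm_add_le _ _).trans ?_
            rw [norm_mul]
        _ ≤ 16 * (K * b * (r : ℝ) ^ (-ε)) * t.card +
            1 * (16 * K * b * (r : ℝ) ^ (-ε) * ((t.card : ℝ) * ((t.card : ℝ) - 1) / 2)) := by
            refine add_le_add hcov2 ?_
            refine mul_le_mul (hIUbd a) ih (norm_nonneg _) zero_le_one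
        _ = 16 * K * b * (r : ℝ) ^ (-ε) *
            ((↑(t.card + 1) : ℝ) * ((↑(t.card + 1) : ℝ) - 1) / 2) := by
            push_cast
            ring
  have h := main Finset.univ
  simpa using h

end
end
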